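/- arXiv:1806.08261 — 8 statements merged into one kernel-verified Lean document; each statement's English description precedes it below -/
import Mathlib

section
/- For every integer m > 1, the zero-divisor graph Γ(ℤ_{2^m}[i]) of the ring of Gaussian integers modulo 2^m is not pancyclic. -/
open SimpleGraph

/-- The set of nonzero zero-divisors of a commutative ring. -/
def zdVertex (R : Type*) [CommRing R] : Set R :=
  {x | x ≠ 0 ∧ ∃ y, y ≠ 0 ∧ x * y = 0}

/-- The zero-divisor graph `Γ(R)` of a commutative ring: vertices are the nonzero
zero-divisors, and distinct vertices are adjacent iff their product is zero. -/
def zdGraph (R : Type*) [CommRing R] : SimpleGraph (zdVertex R) where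
  Adj x y := x ≠ y ∧ (x : R) * y = 0
  symm := ⟨fun x y ⟨h1, h2⟩ => ⟨h1.symm, by rwa [mul_comm]⟩⟩
  loopless := ⟨fun x ⟨h1, _⟩ => h1 rfl⟩

/-- The ring of Gaussian integers modulo `n`, i.e. `ℤ[i]/⟨n⟩`. -/
abbrev Zi (n : ℕ) : Type := GaussianInt ⧸ Ideal.span ({(n : GaussianInt)} : Set GaussianInt)

/-- `G` contains a cycle of length `n`. -/
def HasCycleLength {V : Type*} (G : SimpleGraph V) (n : ℕ) : Prop :=
  ∃ (a : V) (p : G.Walk a a), p.IsCycle ∧ p.length = n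

/-- A graph of order `≥ 3` is pancyclic if it contains cycles of every length
from `3` to its order. -/
def Pancyclic {V : Type*} (G : SimpleGraph V) : Prop :=
  3 ≤ Nat.card V ∧ ∀ k, 3 ≤ k → k ≤ Nat.card V → HasCycleLength G k

/-- A graph is bipancyclic if it contains cycles of every even length from `4`
to its order. -/
def Bipancyclic {V : Type*} (G : SimpleGraph V) : Prop :=
  4 ≤ Nat.card V ∧ ∀ k, Even k → 4 ≤ k → k ≤ Nat.card V → HasCycleLength G k

/-- A graph is Hamiltonian if it contains a cycle passing through every vertex. -/
def IsHamiltonianGraph {V : Type*} (G : SimpleGraph V) : Prop :=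
  ∃ (a : V) (p : G.Walk a a), p.IsCycle ∧ ∀ v, v ∈ p.support

/- ### Auxiliary lemmas -/

lemma gi_two_ne_zero : (2 : GaussianInt) ≠ 0 := by
  intro h; have := congrArg Zsqrtd.re h; simp at this

lemma gi_even_dvd {a b : ℤ} (h : Even (a+b)) : (⟨1,1⟩ : GaussianInt) ∣ ⟨a,b⟩ := by
  obtain ⟨t, ht⟩ := h
  exact ⟨⟨(a+b)/2, (b-a)/2⟩, by ext <;> simp [Zsqrtd.re_mul, Zsqrtd.im_mul] <;> omega⟩

lemma keyA (m : ℕ) (hm : 1 ≤ m) (Y : GaussianInt)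
    (h : (2:GaussianInt)^m ∣ ⟨1,1⟩ * Y) :
    (2:GaussianInt)^m ∣ Y ∨ (2:GaussianInt)^m ∣ (Y - 2^(m-1) * ⟨1,-1⟩) := by
  have hm' : m = (m-1) + 1 := by omega
  have hmul : (⟨1,-1⟩ : GaussianInt) * ⟨1,1⟩ = 2 := by
    ext <;> simp [Zsqrtd.re_mul, Zsqrtd.im_mul]
  have hd : (2:GaussianInt)^(m-1) * ⟨1,-1⟩ ∣ Y := by
    have h2 := mul_dvd_mul_left (⟨1,-1⟩ : GaussianInt) h
    have e1 : (⟨1,-1⟩ : GaussianInt) * (⟨1,1⟩ * Y) = 2 * Y := by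
      rw [← mul_assoc, hmul]
    have e2 : (⟨1,-1⟩ : GaussianInt) * 2^m = 2 * (2^(m-1) * ⟨1,-1⟩) := by
      conv_lhs => rw [hm', pow_succ]
      ring
    rw [e1, e2] at h2
    exact (mul_dvd_mul_iff_left gi_two_ne_zero).mp h2
  obtain ⟨Z, hZ⟩ := hd
  rcases Int.even_or_odd (Z.re + Z.im) with he | ho
  · left
    obtain ⟨W, hW⟩ := gi_even_dvd he
    refine ⟨W, ?_⟩
    have : Z = ⟨Z.re, Z.im⟩ := rfl
    rw [hZ, this, hW,
      show (2:GaussianInt)^(m-1) * ⟨1,-1⟩ * (⟨1,1⟩ * W) = 2^(m-1) * (⟨1,-1⟩ * ⟨1,1⟩) * W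
        from by ring, hmul]
    conv_rhs => rw [hm', pow_succ]
  · right
    have he' : Even ((Z.re - 1) + Z.im) := by
      rcases ho with ⟨t, ht⟩; exact ⟨t, by omega⟩
    obtain ⟨W, hW⟩ := gi_even_dvd he'
    refine ⟨W, ?_⟩
    have hZ1 : Z - 1 = (⟨1,1⟩ : GaussianInt) * W := by
      rw [← hW]; ext <;> simp
    have : Y - 2^(m-1) * ⟨1,-1⟩ = 2^(m-1) * ⟨1,-1⟩ * (Z - 1) := by
      rw [hZ]; ring
    rw [this, hZ1,
      show (2:GaussianInt)^(m-1) * ⟨1,-1⟩ * (⟨1,1⟩ * W) = 2^(m-1) * (⟨1,-1⟩ * ⟨1,1⟩) * W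
        from by ring, hmul]
    conv_rhs => rw [hm', pow_succ]

section Quot
variable (m : ℕ)

noncomputable def pim : GaussianInt →+* Zi (2^m) :=
  Ideal.Quotient.mk (Ideal.span ({((2^m : ℕ) : GaussianInt)} : Set GaussianInt))

lemma pim_surj : Function.Surjective (pim m) := Ideal.Quotient.mk_surjective

lemma pim_eq_zero_iff (Y : GaussianInt) : pim m Y = 0 ↔ (2:GaussianInt)^m ∣ Y := by
  rw [pim, Ideal.Quotient.eq_zero_iff_mem, Ideal.mem_span_singleton]
  norm_cast

lemma pim_not_dvd_one_one (hm : 1 ≤ m) : pim m ⟨1,1⟩ ≠ 0 := by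
  intro h0
  rw [pim_eq_zero_iff] at h0
  have h := h0
  have h2 : (2:GaussianInt) ∣ ⟨1,1⟩ := (dvd_pow_self 2 (by omega : m ≠ 0)).trans h
  obtain ⟨w, hw⟩ := h2
  have := congrArg Zsqrtd.re hw
  simp [Zsqrtd.re_mul] at this
  omega

lemma pim_d_ne_zero (hm : 1 ≤ m) : pim m ((2:GaussianInt)^(m-1) * ⟨1,-1⟩) ≠ 0 := by
  intro h0
  rw [pim_eq_zero_iff] at h0
  have h := h0
  have hm' : m = (m-1) + 1 := by omega
  obtain ⟨w, hw⟩ := h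
  have hpow : (2:GaussianInt)^m = 2^(m-1)*2 := by
    conv_lhs => rw [hm', pow_succ]
  have hc : (2:GaussianInt)^(m-1) * ⟨1,-1⟩ = 2^(m-1) * (2 * w) := by
    rw [hw, hpow, mul_assoc]
  have h2 : (⟨1,-1⟩ : GaussianInt) = 2 * w :=
    mul_left_cancel₀ (pow_ne_zero _ gi_two_ne_zero) hc
  have := congrArg Zsqrtd.re h2
  simp [Zsqrtd.re_mul] at this
  omega

lemma pim_prod_zero (hm : 1 ≤ m) :
    pim m ⟨1,1⟩ * pim m ((2:GaussianInt)^(m-1) * ⟨1,-1⟩) = 0 := by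
  rw [← map_mul, pim_eq_zero_iff]
  have hmul : (⟨1,1⟩ : GaussianInt) * ⟨1,-1⟩ = 2 := by
    ext <;> simp [Zsqrtd.re_mul, Zsqrtd.im_mul]
  refine ⟨1, ?_⟩
  rw [mul_one, ← mul_assoc, mul_comm (⟨1,1⟩:GaussianInt), mul_assoc, hmul, ← pow_succ]
  congr 1
  omega

/-- Any y with (1+i)·y = 0 in Zi (2^m) is 0 or the class of 2^(m-1)(1-i). -/
lemma unique_neighbor (hm : 1 ≤ m) (y : Zi (2^m)) (h : pim m ⟨1,1⟩ * y = 0) :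
    y = 0 ∨ y = pim m ((2:GaussianInt)^(m-1) * ⟨1,-1⟩) := by
  obtain ⟨Y, rfl⟩ := pim_surj m y
  rw [← map_mul, pim_eq_zero_iff] at h
  rcases keyA m hm Y h with h1 | h2
  · left; rw [pim_eq_zero_iff]; exact h1
  · right
    have : pim m (Y - 2^(m-1) * ⟨1,-1⟩) = 0 := by rw [pim_eq_zero_iff]; exact h2
    rw [map_sub, sub_eq_zero] at this
    exact this

end Quot

theorem stmt0 (m : ℕ) (hm : 1 < m) : ¬ Pancyclic (zdGraph (Zi (2 ^ m))) := by
  intro ⟨hcard, hcyc⟩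
  classical
  have hm1 : 1 ≤ m := le_of_lt hm
  set d : Zi (2^m) := pim m ((2:GaussianInt)^(m-1) * ⟨1,-1⟩) with hd
  -- the special vertex
  have hxmem : (pim m ⟨1,1⟩ : Zi (2^m)) ∈ zdVertex (Zi (2^m)) :=
    ⟨pim_not_dvd_one_one m hm1, d, pim_d_ne_zero m hm1, pim_prod_zero m hm1⟩
  set x : zdVertex (Zi (2^m)) := ⟨pim m ⟨1,1⟩, hxmem⟩ with hxdef
  -- any neighbor of x equals d
  have huniq : ∀ y : zdVertex (Zi (2^m)), (zdGraph (Zi (2^m))).Adj x y → (y : Zi (2^m)) = d := by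
    rintro y (⟨-, hxy⟩ : x ≠ y ∧ (x : Zi (2^m)) * y = 0)
    rcases unique_neighbor m hm1 (y : Zi (2^m)) hxy with h0 | h1
    · exact absurd h0 y.prop.1
    · exact h1
  -- get a Hamiltonian cycle
  obtain ⟨a, p, hp, hlen⟩ := hcyc (Nat.card (zdVertex (Zi (2^m)))) (by omega) le_rfl
  have hfin : Finite (zdVertex (Zi (2^m))) := Nat.finite_of_card_ne_zero (by omega)
  have hfin' : Fintype (zdVertex (Zi (2^m))) := Fintype.ofFinite _
  -- x is in the support of p
  have hnil : ¬ p.Nil := hp.not_nil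
  have htail : p.support.tail.Nodup := hp.support_nodup
  have hlen' : p.support.tail.length = Nat.card (zdVertex (Zi (2^m))) := by
    have := p.length_support
    have : p.support.tail.length = p.length := by
      rw [List.length_tail, this]; omega
    omega
  have hall : ∀ v : zdVertex (Zi (2^m)), v ∈ p.support.tail := by
    intro v
    have hcardt : p.support.tail.toFinset.card = Fintype.card (zdVertex (Zi (2^m))) := by
      rw [List.toFinset_card_of_nodup htail, hlen', Nat.card_eq_fintype_card]
    have : p.support.tail.toFinset = Finset.univ :=
      Finset.eq_univ_of_card _ hcardt
    have hv : v ∈ p.support.tail.toFinset := this ▸ Finset.mem_univ v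
    simpa using hv
  have hxsup : x ∈ p.support := List.mem_of_mem_tail (hall x)
  -- rotate the cycle to start at x
  set q : (zdGraph (Zi (2^m))).Walk x x := p.rotate x hxsup with hq
  have hqc : q.IsCycle := hp.rotate hxsup
  have hq3 : 3 ≤ q.length := hqc.three_le_length
  obtain ⟨b, hab, q1, hq1⟩ := SimpleGraph.Walk.not_nil_iff.mp hqc.not_nil
  have hcyc1 := (SimpleGraph.Walk.cons_isCycle_iff q1 hab).mp (hq1 ▸ hqc)
  -- q1 is not nil
  have hq1len : 2 ≤ q1.length := by
    have : q.length = q1.length + 1 := by rw [hq1]; simp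
    omega
  have hq1nil : ¬ q1.reverse.Nil := by
    rw [SimpleGraph.Walk.nil_iff_length_eq]
    simp only [SimpleGraph.Walk.length_reverse]
    omega
  obtain ⟨c, hxc, r, hr⟩ := SimpleGraph.Walk.not_nil_iff.mp hq1nil
  -- both b and c equal d, hence b = c
  have hbc : b = c := by
    have h1 : (b : Zi (2^m)) = d := huniq b hab
    have h2 : (c : Zi (2^m)) = d := huniq c hxc
    exact Subtype.ext (h1.trans h2.symm)
  -- the edge s(x,c) is in q1.reverse, hence in q1
  have hmem : s(x, c) ∈ q1.reverse.edges := by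
    rw [hr]; simp
  rw [SimpleGraph.Walk.edges_reverse, List.mem_reverse] at hmem
  rw [← hbc] at hmem
  exact hcyc1.2 hmem
end

section
/- For m > 1, the zero-divisor graph Γ(ℤ_{2^m}[i]) has exactly 2^{2m-2} vertices of degree 1 (pendant vertices). -/
open SimpleGraph

open GaussianInt
abbrev gpi : GaussianInt := ⟨1,1⟩

lemma gpi_ne : gpi ≠ 0 := by decide

lemma prime_gpi : Prime gpi := by
  rw [← UniqueFactorizationMonoid.irreducible_iff_prime]
  constructor
  · intro h
    have := Zsqrtd.norm_eq_one_iff.2 h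
    revert this; decide
  · intro a b hab
    have h2 : (Zsqrtd.norm a).natAbs * (Zsqrtd.norm b).natAbs = 2 := by
      have := congrArg (fun z => (Zsqrtd.norm z).natAbs) hab
      simpa [Zsqrtd.norm_mul, Int.natAbs_mul, show (Zsqrtd.norm gpi).natAbs = 2 by decide] using this.symm
    have : (Zsqrtd.norm a).natAbs = 1 ∨ (Zsqrtd.norm b).natAbs = 1 := by
      rcases Nat.prime_two.eq_one_or_self_of_dvd ((Zsqrtd.norm a).natAbs) ⟨_, h2.symm⟩ with h | h
      · exact Or.inl h
      · rw [h] at h2; right; omega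
    rcases this with h | h
    · exact Or.inl (Zsqrtd.norm_eq_one_iff.1 h)
    · exact Or.inr (Zsqrtd.norm_eq_one_iff.1 h)

lemma gpi_dvd_iff (z : GaussianInt) : gpi ∣ z ↔ 2 ∣ z.re + z.im := by
  constructor
  · rintro ⟨w, rfl⟩
    simp [Zsqrtd.re_mul, Zsqrtd.im_mul]
    omega
  · intro h
    refine ⟨⟨(z.re+z.im)/2, (z.im - z.re)/2⟩, ?_⟩
    ext <;> simp [Zsqrtd.re_mul, Zsqrtd.im_mul] <;> omega

lemma assoc2 : Associated (2 : GaussianInt) (gpi^2) := by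
  refine ⟨⟨⟨0,1⟩,⟨0,-1⟩, by decide, by decide⟩, ?_⟩
  show 2 * (⟨0,1⟩ : GaussianInt) = gpi ^ 2
  rw [pow_two]; decide

lemma gpi_sq_dvd_iff (z : GaussianInt) : gpi^2 ∣ z ↔ 2 ∣ z.re ∧ 2 ∣ z.im := by
  rw [← assoc2.dvd_iff_dvd_left, show (2:GaussianInt) = ((2:ℤ):GaussianInt) by norm_num,
    Zsqrtd.intCast_dvd]

lemma assoc2m (m : ℕ) : Associated ((2:GaussianInt)^m) (gpi^(2*m)) := by
  rw [mul_comm 2 m, pow_mul']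
  exact (assoc2.pow_pow ..)

lemma mk_eq_zero_iff (m : ℕ) (x : GaussianInt) :
    (Ideal.Quotient.mk (Ideal.span {((2^m : ℕ) : GaussianInt)}) x = 0) ↔ gpi^(2*m) ∣ x := by
  rw [Ideal.Quotient.eq_zero_iff_mem, Ideal.mem_span_singleton]
  have : ((2^m : ℕ) : GaussianInt) = (2:GaussianInt)^m := by push_cast; ring
  rw [this]
  exact (assoc2m m).dvd_iff_dvd_left

lemma mk_eq_mk_iff (m : ℕ) (x y : GaussianInt) :
    (Ideal.Quotient.mk (Ideal.span {((2^m : ℕ) : GaussianInt)}) x =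
     Ideal.Quotient.mk _ y) ↔ gpi^(2*m) ∣ x - y := by
  rw [Ideal.Quotient.eq, Ideal.mem_span_singleton]
  have : ((2^m : ℕ) : GaussianInt) = (2:GaussianInt)^m := by push_cast; ring
  rw [this]
  exact (assoc2m m).dvd_iff_dvd_left

lemma not_dvd_shift (a b : ℕ) (c : GaussianInt) (h : ¬ gpi^b ∣ c) : ¬ gpi^(a+b) ∣ gpi^a * c := by
  rw [pow_add, mul_dvd_mul_iff_left (pow_ne_zero a gpi_ne)]; exact h

lemma gpi_not_dvd_one : ¬ gpi ∣ 1 := fun h => prime_gpi.not_unit (isUnit_of_dvd_one h)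

lemma gpi_sq_not_dvd_gpi : ¬ gpi^2 ∣ gpi := by
  intro h
  rw [pow_two, ← mul_one gpi, mul_assoc, mul_dvd_mul_iff_left gpi_ne] at h
  exact gpi_not_dvd_one (by simpa using h)

lemma gpi_sq_not_dvd_one : ¬ gpi^2 ∣ (1:GaussianInt) :=
  fun h => gpi_not_dvd_one (dvd_trans (dvd_pow_self gpi two_ne_zero) h)

lemma gpi_sq_not_dvd_add_one : ¬ gpi^2 ∣ (gpi + 1) := by
  intro h
  have h1 : gpi ∣ gpi + 1 := dvd_trans (dvd_pow_self gpi two_ne_zero) h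
  exact gpi_not_dvd_one ((dvd_add_right (dvd_refl gpi)).1 h1)

lemma gpi_sq_not_dvd_sub_one : ¬ gpi^2 ∣ (gpi - 1) := by
  intro h
  have h1 : gpi ∣ gpi - 1 := dvd_trans (dvd_pow_self gpi two_ne_zero) h
  exact gpi_not_dvd_one ((dvd_sub_right (dvd_refl gpi)).1 h1)

lemma pendant_iff (m : ℕ) (hm : 1 < m) (x : GaussianInt) :
    (∃ hx : Ideal.Quotient.mk (Ideal.span {((2^m : ℕ) : GaussianInt)}) x ∈ zdVertex (Zi (2^m)),
       Nat.card ((zdGraph (Zi (2^m))).neighborSet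
         ⟨Ideal.Quotient.mk (Ideal.span {((2^m : ℕ) : GaussianInt)}) x, hx⟩) = 1)
    ↔ (gpi ∣ x ∧ ¬ gpi^2 ∣ x) := by
  have hsplit : ∀ a b : ℕ, a + b = 2*m → (gpi^(2*m) : GaussianInt) = gpi^a * gpi^b := by
    intro a b h; rw [← h, pow_add]
  set Q := Ideal.Quotient.mk (Ideal.span {((2^m : ℕ) : GaussianInt)}) with hQ
  have Qzero : ∀ z, Q z = 0 ↔ gpi^(2*m) ∣ z := fun z => mk_eq_zero_iff m z
  have Qeq : ∀ z w, Q z = Q w ↔ gpi^(2*m) ∣ z - w := fun z w => mk_eq_mk_iff m z w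
  constructor
  · rintro ⟨hx, hcard⟩
    obtain ⟨hx0, y, hy0, hxy⟩ := hx
    have hdvd : gpi ∣ x := by
      by_contra hpx
      obtain ⟨z, rfl⟩ := Ideal.Quotient.mk_surjective y
      rw [← map_mul, Qzero] at hxy
      exact hy0 ((Qzero z).2 (prime_gpi.pow_dvd_of_dvd_mul_left _ hpx hxy))
    refine ⟨hdvd, ?_⟩
    rintro ⟨w, rfl⟩
    have hne : ∀ c : GaussianInt, ¬ gpi^2 ∣ c → Q (gpi^(2*m-2) * c) ≠ 0 := by
      intro c hc h0
      rw [Qzero, hsplit (2*m-2) 2 (by omega),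
        mul_dvd_mul_iff_left (pow_ne_zero _ gpi_ne)] at h0
      exact hc h0
    have hprod : ∀ c₁ c₂ : GaussianInt,
        Q (gpi^(2*m-2) * c₁) * Q (gpi^(2*m-2) * c₂) = 0 := by
      intro c₁ c₂
      rw [← map_mul, Qzero]
      have heq : (gpi^(2*m-2) * c₁) * (gpi^(2*m-2) * c₂)
          = gpi^((2*m-2)+(2*m-2)) * (c₁ * c₂) := by rw [pow_add]; ring
      rw [heq]
      exact dvd_mul_of_dvd_left (pow_dvd_pow _ (by omega)) _
    have hmem : ∀ c : GaussianInt, ¬ gpi^2 ∣ c → Q (gpi^(2*m-2) * c) ∈ zdVertex (Zi (2^m)) := by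
      intro c hc
      exact ⟨hne c hc, _, hne gpi gpi_sq_not_dvd_gpi, hprod c gpi⟩
    have hadj : ∀ c : GaussianInt, Q (gpi^2 * w) * Q (gpi^(2*m-2) * c) = 0 := by
      intro c
      rw [← map_mul, Qzero]
      exact ⟨w * c, by rw [hsplit (2*m-2) 2 (by omega)]; ring⟩
    have hdist : ∀ c₁ c₂ : GaussianInt, ¬ gpi^2 ∣ (c₁ - c₂) →
        Q (gpi^(2*m-2) * c₁) ≠ Q (gpi^(2*m-2) * c₂) := by
      intro c₁ c₂ hc h
      rw [Qeq, ← mul_sub, hsplit (2*m-2) 2 (by omega),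
        mul_dvd_mul_iff_left (pow_ne_zero _ gpi_ne)] at h
      exact hc h
    obtain ⟨a, ha⟩ := Nat.card_eq_one_iff_exists.1 hcard
    have uniq : ∀ (p₁ p₂ : ↥(zdVertex (Zi (2^m))))
        (h₁ : p₁ ∈ (zdGraph (Zi (2^m))).neighborSet ⟨_, ⟨hx0, y, hy0, hxy⟩⟩)
        (h₂ : p₂ ∈ (zdGraph (Zi (2^m))).neighborSet ⟨_, ⟨hx0, y, hy0, hxy⟩⟩), p₁ = p₂ := by
      intro p₁ p₂ h₁ h₂
      exact congrArg Subtype.val ((ha ⟨p₁, h₁⟩).trans (ha ⟨p₂, h₂⟩).symm)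
    have d12 : Q (gpi^(2*m-2) * gpi) ≠ Q (gpi^(2*m-2) * 1) :=
      hdist _ _ (by simpa using gpi_sq_not_dvd_sub_one)
    have d13 : Q (gpi^(2*m-2) * gpi) ≠ Q (gpi^(2*m-2) * (gpi+1)) :=
      hdist _ _ (by
        have h' : gpi - (gpi + 1) = -1 := by ring
        rw [h']
        intro h; exact gpi_sq_not_dvd_one ((dvd_neg).1 h))
    have d23 : Q (gpi^(2*m-2) * 1) ≠ Q (gpi^(2*m-2) * (gpi+1)) :=
      hdist _ _ (by
        have h' : (1 : GaussianInt) - (gpi + 1) = -gpi := by ring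
        rw [h']
        intro h; exact gpi_sq_not_dvd_gpi ((dvd_neg).1 h))
    have nb : ∀ c : GaussianInt, (hc : ¬ gpi^2 ∣ c) → Q (gpi^2*w) ≠ Q (gpi^(2*m-2)*c) →
        (⟨Q (gpi^(2*m-2)*c), hmem c hc⟩ : ↥(zdVertex (Zi (2^m)))) ∈
          (zdGraph (Zi (2^m))).neighborSet ⟨_, ⟨hx0, y, hy0, hxy⟩⟩ := by
      intro c hc hne'
      exact And.intro (fun h => hne' (congrArg Subtype.val h)) (hadj c)
    by_cases e1 : Q (gpi^2*w) = Q (gpi^(2*m-2)*gpi)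
    · have n2 := nb 1 gpi_sq_not_dvd_one (e1 ▸ d12)
      have n3 := nb (gpi+1) gpi_sq_not_dvd_add_one (e1 ▸ d13)
      exact d23 (congrArg Subtype.val (uniq _ _ n2 n3))
    · by_cases e2 : Q (gpi^2*w) = Q (gpi^(2*m-2)*1)
      · have n1 := nb gpi gpi_sq_not_dvd_gpi e1
        have n3 := nb (gpi+1) gpi_sq_not_dvd_add_one (e2 ▸ d23)
        exact d13 (congrArg Subtype.val (uniq _ _ n1 n3))
      · have n1 := nb gpi gpi_sq_not_dvd_gpi e1
        have n2 := nb 1 gpi_sq_not_dvd_one e2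
        exact d12 (congrArg Subtype.val (uniq _ _ n1 n2))
  · rintro ⟨⟨u, rfl⟩, hsq⟩
    have hu : ¬ gpi ∣ u := by
      rintro ⟨c, rfl⟩
      exact hsq ⟨c, by ring⟩
    have hcancel : ∀ z : GaussianInt, gpi^(2*m) ∣ gpi * z → gpi^(2*m-1) ∣ z := by
      intro z h
      rw [hsplit 1 (2*m-1) (by omega), pow_one, mul_dvd_mul_iff_left gpi_ne] at h
      exact h
    have hcancel2 : ∀ z : GaussianInt, gpi^(2*m) ∣ gpi^(2*m-1) * z → gpi ∣ z := by
      intro z h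
      rw [hsplit (2*m-1) 1 (by omega), pow_one,
        mul_dvd_mul_iff_left (pow_ne_zero _ gpi_ne)] at h
      exact h
    have hx0 : Q (gpi * u) ≠ 0 := by
      intro h
      rw [Qzero] at h
      exact hu (dvd_trans (dvd_pow_self gpi (by omega : 2*m-1 ≠ 0)) (hcancel u h))
    have ht0 : Q (gpi^(2*m-1)) ≠ 0 := by
      intro h
      rw [Qzero] at h
      exact gpi_not_dvd_one (hcancel2 1 (by simpa using h))
    have hprod : Q (gpi * u) * Q (gpi^(2*m-1)) = 0 := by
      rw [← map_mul, Qzero]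
      exact ⟨u, by rw [hsplit 1 (2*m-1) (by omega), pow_one]; ring⟩
    have htmem : Q (gpi^(2*m-1)) ∈ zdVertex (Zi (2^m)) := by
      refine ⟨ht0, Q (gpi^(2*m-1)), ht0, ?_⟩
      rw [← map_mul, Qzero, ← pow_add]
      exact pow_dvd_pow _ (by omega)
    have hxmem : Q (gpi * u) ∈ zdVertex (Zi (2^m)) := ⟨hx0, _, ht0, hprod⟩
    refine ⟨hxmem, ?_⟩
    have hsingle : (zdGraph (Zi (2^m))).neighborSet ⟨Q (gpi*u), hxmem⟩ =
        {⟨Q (gpi^(2*m-1)), htmem⟩} := by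
      ext p
      constructor
      · rintro (⟨hnep, hmul⟩ : _ ∧ _)
        obtain ⟨z, hz⟩ := Ideal.Quotient.mk_surjective (p : Zi (2^m))
        rw [← hz, ← map_mul, Qzero] at hmul
        rw [mul_assoc] at hmul
        have h1 : gpi^(2*m-1) ∣ u * z := hcancel _ hmul
        have h2 : gpi^(2*m-1) ∣ z := prime_gpi.pow_dvd_of_dvd_mul_left _ hu h1
        obtain ⟨c, rfl⟩ := h2
        have hp0 : (p : Zi (2^m)) ≠ 0 := p.2.1
        have hcodd : ¬ gpi ∣ c := by
          rintro ⟨e, rfl⟩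
          apply hp0
          rw [← hz, Qzero]
          exact ⟨e, by rw [hsplit (2*m-1) 1 (by omega), pow_one]; ring⟩
        have hc1 : gpi ∣ c - 1 := by
          rw [gpi_dvd_iff] at hcodd ⊢
          simp only [Zsqrtd.re_sub, Zsqrtd.im_sub, Zsqrtd.re_one, Zsqrtd.im_one] at *
          omega
        have hpt : (p : Zi (2^m)) = Q (gpi^(2*m-1)) := by
          rw [← hz, Qeq]
          obtain ⟨e, he⟩ := hc1
          refine ⟨e, ?_⟩
          have : gpi^(2*m-1) * c - gpi^(2*m-1) = gpi^(2*m-1) * (c - 1) := by ring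
          rw [this, he, hsplit (2*m-1) 1 (by omega), pow_one]; ring
        exact Set.mem_singleton_iff.2 (Subtype.ext hpt)
      · rintro rfl
        refine And.intro ?_ hprod
        intro h
        have h2 := congrArg Subtype.val h
        simp only at h2
        rw [Qeq] at h2
        have hp3 : (gpi^(2*m-1) : GaussianInt) = gpi * gpi^(2*m-2) := by
          rw [← pow_succ']; congr 1; omega
        have h3 : gpi * u - gpi^(2*m-1) = gpi * (u - gpi^(2*m-2)) := by
          rw [hp3]; ring
        rw [h3] at h2
        have h4 := hcancel _ h2
        have h5 : gpi ∣ u - gpi^(2*m-2) :=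
          dvd_trans (dvd_pow_self gpi (by omega : 2*m-1 ≠ 0)) h4
        have h6 : gpi ∣ gpi^(2*m-2) := dvd_pow_self gpi (by omega : 2*m-2 ≠ 0)
        exact hu (by have := dvd_add h5 h6; simpa using this)
    rw [hsingle]
    rw [Nat.card_eq_one_iff_exists]
    exact ⟨⟨_, rfl⟩, fun y => Subtype.ext y.2⟩

lemma toZi_bijective (m : ℕ) (hm : 0 < m) : Function.Bijective
    (fun p : ZMod (2^m) × ZMod (2^m) =>
      Ideal.Quotient.mk (Ideal.span {((2^m : ℕ) : GaussianInt)})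
        (⟨(p.1.val : ℤ), (p.2.val : ℤ)⟩ : GaussianInt)) := by
  haveI : NeZero (2^m) := ⟨by positivity⟩
  have hcast : ((2^m : ℕ) : GaussianInt) = (((2^m : ℕ) : ℤ) : GaussianInt) := by push_cast; ring
  constructor
  · intro p q h
    simp only [Ideal.Quotient.eq, Ideal.mem_span_singleton, hcast, Zsqrtd.intCast_dvd] at h
    obtain ⟨h1, h2⟩ := h
    simp only [Zsqrtd.re_sub, Zsqrtd.im_sub] at h1 h2
    have e1 : p.1 = q.1 := by
      have := (ZMod.intCast_zmod_eq_zero_iff_dvd ((p.1.val : ℤ) - (q.1.val : ℤ)) (2^m)).2 h1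
      push_cast at this
      simpa [ZMod.natCast_val, ZMod.cast_id, sub_eq_zero] using this
    have e2 : p.2 = q.2 := by
      have := (ZMod.intCast_zmod_eq_zero_iff_dvd ((p.2.val : ℤ) - (q.2.val : ℤ)) (2^m)).2 h2
      push_cast at this
      simpa [ZMod.natCast_val, ZMod.cast_id, sub_eq_zero] using this
    exact Prod.ext e1 e2
  · intro v
    obtain ⟨z, rfl⟩ := Ideal.Quotient.mk_surjective v
    refine ⟨((z.re : ZMod (2^m)), (z.im : ZMod (2^m))), ?_⟩
    simp only [Ideal.Quotient.eq, Ideal.mem_span_singleton, hcast, Zsqrtd.intCast_dvd]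
    constructor
    · rw [← ZMod.intCast_zmod_eq_zero_iff_dvd]
      push_cast
      simp [ZMod.natCast_val, ZMod.cast_id, ZMod.intCast_cast, sub_eq_zero]
    · rw [← ZMod.intCast_zmod_eq_zero_iff_dvd]
      push_cast
      simp [ZMod.natCast_val, ZMod.cast_id, ZMod.intCast_cast, sub_eq_zero]

lemma isUnit_iff_odd (m : ℕ) (hm : 0 < m) (a : ZMod (2^m)) :
    IsUnit a ↔ ¬ (2:ℤ) ∣ (a.val : ℤ) := by
  haveI : NeZero (2^m) := ⟨by positivity⟩
  conv_lhs => rw [show a = ((a.val : ℕ) : ZMod (2^m)) by simp [ZMod.natCast_val, ZMod.cast_id]]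
  rw [ZMod.isUnit_iff_coprime, Nat.coprime_pow_right_iff hm, Nat.coprime_comm,
    Nat.Prime.coprime_iff_not_dvd Nat.prime_two]
  norm_cast

theorem stmt1 (m : ℕ) (hm : 1 < m) :
    Nat.card {v : zdVertex (Zi (2 ^ m)) //
      Nat.card ((zdGraph (Zi (2 ^ m))).neighborSet v) = 1} = 2 ^ (2 * m - 2) := by
  classical
  haveI : NeZero (2^m) := ⟨by positivity⟩
  let P : Set (Zi (2^m)) := {x | ∃ hx : x ∈ zdVertex (Zi (2^m)),
      Nat.card ((zdGraph (Zi (2^m))).neighborSet ⟨x, hx⟩) = 1}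
  let e1 : {v : ↥(zdVertex (Zi (2^m))) //
      Nat.card ((zdGraph (Zi (2^m))).neighborSet v) = 1} ≃ ↥P :=
    { toFun := fun v => ⟨v.1.1, v.1.2, v.2⟩
      invFun := fun p => ⟨⟨p.1, p.2.choose⟩, p.2.choose_spec⟩
      left_inv := fun v => by apply Subtype.ext; apply Subtype.ext; rfl
      right_inv := fun p => by apply Subtype.ext; rfl }
  have hiff : ∀ p : ZMod (2^m) × ZMod (2^m), (IsUnit p.1 ∧ IsUnit p.2) ↔
      (Ideal.Quotient.mk (Ideal.span {((2^m : ℕ) : GaussianInt)})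
        (⟨(p.1.val : ℤ), (p.2.val : ℤ)⟩ : GaussianInt) ∈ P) := by
    intro p
    have hP : (Ideal.Quotient.mk (Ideal.span {((2^m : ℕ) : GaussianInt)})
        (⟨(p.1.val : ℤ), (p.2.val : ℤ)⟩ : GaussianInt) ∈ P) ↔
        (gpi ∣ (⟨(p.1.val : ℤ), (p.2.val : ℤ)⟩ : GaussianInt) ∧
         ¬ gpi^2 ∣ (⟨(p.1.val : ℤ), (p.2.val : ℤ)⟩ : GaussianInt)) :=
      pendant_iff m hm _
    rw [hP, gpi_dvd_iff, gpi_sq_dvd_iff, isUnit_iff_odd m (by omega), isUnit_iff_odd m (by omega)]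
    simp only []
    constructor
    · rintro ⟨h1, h2⟩; exact ⟨by omega, by omega⟩
    · rintro ⟨h1, h2⟩; exact ⟨by omega, by omega⟩
  let e2 : {p : ZMod (2^m) × ZMod (2^m) // IsUnit p.1 ∧ IsUnit p.2} ≃ ↥P :=
    (Equiv.ofBijective _ (toZi_bijective m (by omega))).subtypeEquiv hiff
  let e3 : {p : ZMod (2^m) × ZMod (2^m) // IsUnit p.1 ∧ IsUnit p.2} ≃
      {a : ZMod (2^m) // IsUnit a} × {b : ZMod (2^m) // IsUnit b} :=
    Equiv.subtypeProdEquivProd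
  let e4 : (ZMod (2^m))ˣ ≃ {a : ZMod (2^m) // IsUnit a} :=
    { toFun := fun u => ⟨u, u.isUnit⟩
      invFun := fun a => a.2.unit
      left_inv := fun u => Units.ext rfl
      right_inv := fun a => Subtype.ext a.2.unit_spec }
  have hcardu : Nat.card {a : ZMod (2^m) // IsUnit a} = 2^(m-1) := by
    rw [← Nat.card_congr e4, Nat.card_eq_fintype_card, ZMod.card_units_eq_totient,
      Nat.totient_prime_pow Nat.prime_two (by omega)]
    simp
  calc Nat.card {v : ↥(zdVertex (Zi (2^m))) //
        Nat.card ((zdGraph (Zi (2^m))).neighborSet v) = 1}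
      = Nat.card ↥P := Nat.card_congr e1
    _ = Nat.card {p : ZMod (2^m) × ZMod (2^m) // IsUnit p.1 ∧ IsUnit p.2} :=
        (Nat.card_congr e2).symm
    _ = Nat.card ({a : ZMod (2^m) // IsUnit a} × {b : ZMod (2^m) // IsUnit b}) :=
        Nat.card_congr e3
    _ = 2^(m-1) * 2^(m-1) := by rw [Nat.card_prod, hcardu]
    _ = 2^(2*m-2) := by rw [← pow_add]; congr 1; omega
end

section
/- The zero-divisor graph Γ(ℤ_{2^m}[i]) has exactly 2^{2m-1} − 1 vertices. -/
open SimpleGraph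

section Aux
open Zsqrtd GaussianInt

set_option synthInstance.maxHeartbeats 400000 in
lemma prime_onePlusI : Prime (⟨1,1⟩ : GaussianInt) := by
  rw [← irreducible_iff_prime]
  constructor
  · intro hu
    have := Zsqrtd.norm_eq_one_iff.mpr hu
    simp [Zsqrtd.norm] at this
  · intro a b hab
    have hn : a.norm.natAbs * b.norm.natAbs = 2 := by
      have h2 : (Zsqrtd.norm (⟨1,1⟩ : GaussianInt)) = 2 := by simp [Zsqrtd.norm]
      rw [← Int.natAbs_mul, ← Zsqrtd.norm_mul, ← hab, h2]; rfl
    rcases Nat.prime_two.eq_one_or_self_of_dvd a.norm.natAbs ⟨_, hn.symm⟩ with h | h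
    · exact Or.inl (Zsqrtd.norm_eq_one_iff.mp h)
    · refine Or.inr (Zsqrtd.norm_eq_one_iff.mp ?_)
      rw [h] at hn; omega

lemma mul_onePlusI_conj : ((⟨1,1⟩ : GaussianInt) * ⟨1,-1⟩) = 2 := by
  ext <;> simp

lemma sq_onePlusI : (⟨1,1⟩ : GaussianInt)^2 = 2 * ⟨0,1⟩ := by ext <;> simp [pow_two]

lemma unit_i : IsUnit (⟨0,1⟩ : GaussianInt) := by
  refine IsUnit.of_mul_eq_one ⟨0,-1⟩ ?_
  ext <;> simp

lemma onePlusI_dvd_iff (x : GaussianInt) : (⟨1,1⟩ : GaussianInt) ∣ x ↔ (2:ℤ) ∣ x.re + x.im := by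
  constructor
  · rintro ⟨y, rfl⟩
    refine ⟨y.re, ?_⟩
    simp [Zsqrtd.re_mul, Zsqrtd.im_mul]; ring
  · rintro ⟨k, hk⟩
    refine ⟨⟨k, k - x.re⟩, ?_⟩
    ext <;> simp [Zsqrtd.re_mul, Zsqrtd.im_mul] <;> omega

/-- ℤ[i] → 𝔽₂, x ↦ re + im mod 2. -/
def phi2 : GaussianInt →+* ZMod 2 where
  toFun x := ((x.re + x.im : ℤ) : ZMod 2)
  map_one' := by simp
  map_zero' := by simp
  map_add' x y := by simp only [Zsqrtd.re_add, Zsqrtd.im_add]; push_cast; ring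
  map_mul' x y := by
    have h2 : ((2:ℤ) : ZMod 2) = 0 := by decide
    simp only [Zsqrtd.re_mul, Zsqrtd.im_mul]
    push_cast
    linear_combination (-(y.im : ZMod 2) * x.im) * h2

lemma phi2_eq_zero_iff (x : GaussianInt) : phi2 x = 0 ↔ (⟨1,1⟩ : GaussianInt) ∣ x := by
  rw [onePlusI_dvd_iff]
  show (((x.re + x.im : ℤ) : ZMod 2) = 0) ↔ _
  rw [ZMod.intCast_zmod_eq_zero_iff_dvd]
  norm_num

lemma pow_onePlusI (m : ℕ) : (⟨1,1⟩ : GaussianInt)^(2*m) = 2^m * ⟨0,1⟩^m := by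
  rw [pow_mul, sq_onePlusI, mul_pow]

lemma assoc_pow (m : ℕ) : Associated ((2 : GaussianInt)^m) ((⟨1,1⟩ : GaussianInt)^(2*m)) := by
  rw [pow_onePlusI]
  exact ⟨(unit_i.pow m).unit, by rw [IsUnit.unit_spec]⟩

/-- The cardinality of ℤ[i]/(n). -/
lemma card_Zi (n : ℕ) (hn : 0 < n) : Nat.card (Zi n) = n^2 := by
  haveI : NeZero n := ⟨hn.ne'⟩
  have hg : Function.Bijective (fun p : ZMod n × ZMod n =>
      (Ideal.Quotient.mk (Ideal.span ({(n : GaussianInt)} : Set GaussianInt))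
        ⟨(p.1.val : ℤ), (p.2.val : ℤ)⟩ : Zi n)) := by
    constructor
    · rintro ⟨a, b⟩ ⟨c, d⟩ h
      simp only [Ideal.Quotient.mk_eq_mk_iff_sub_mem, ← Ideal.mem_span_singleton] at h
      rw [Ideal.mem_span_singleton] at h
      have hd : ((n:ℤ) : GaussianInt) ∣ (⟨(a.val : ℤ), (b.val : ℤ)⟩ - ⟨(c.val : ℤ), (d.val : ℤ)⟩ : GaussianInt) := by
        exact_mod_cast h
      rw [Zsqrtd.intCast_dvd] at hd
      obtain ⟨h1, h2⟩ := hd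
      simp only [Zsqrtd.re_sub, Zsqrtd.im_sub] at h1 h2
      have e1 : (a : ZMod n) = c := by
        have h1' : ((((a.val : ℤ) - (c.val : ℤ)) : ℤ) : ZMod n) = 0 :=
          (ZMod.intCast_zmod_eq_zero_iff_dvd _ n).mpr (by exact_mod_cast h1)
        push_cast at h1'
        simpa [ZMod.natCast_val, ZMod.cast_id, sub_eq_zero] using h1'
      have e2 : (b : ZMod n) = d := by
        have h2' : ((((b.val : ℤ) - (d.val : ℤ)) : ℤ) : ZMod n) = 0 :=
          (ZMod.intCast_zmod_eq_zero_iff_dvd _ n).mpr (by exact_mod_cast h2)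
        push_cast at h2'
        simpa [ZMod.natCast_val, ZMod.cast_id, sub_eq_zero] using h2' 
      simp [Prod.ext_iff, e1, e2]
    · intro z
      obtain ⟨x, rfl⟩ := Ideal.Quotient.mk_surjective z
      refine ⟨⟨(x.re : ZMod n), (x.im : ZMod n)⟩, ?_⟩
      rw [Ideal.Quotient.mk_eq_mk_iff_sub_mem, Ideal.mem_span_singleton]
      have key : ((n:ℤ) : GaussianInt) ∣
          ((⟨(((x.re : ZMod n)).val : ℤ), (((x.im : ZMod n)).val : ℤ)⟩ : GaussianInt) - x) := by
        rw [Zsqrtd.intCast_dvd]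
        constructor
        · simp only [Zsqrtd.re_sub]
          refine (ZMod.intCast_zmod_eq_zero_iff_dvd _ n).mp ?_
          push_cast
          simp [ZMod.natCast_val, ZMod.intCast_cast, ZMod.intCast_zmod_cast]
        · simp only [Zsqrtd.im_sub]
          refine (ZMod.intCast_zmod_eq_zero_iff_dvd _ n).mp ?_
          push_cast
          simp [ZMod.natCast_val, ZMod.intCast_cast, ZMod.intCast_zmod_cast]
      exact_mod_cast key
  calc Nat.card (Zi n) = Nat.card (ZMod n × ZMod n) :=
        (Nat.card_congr (Equiv.ofBijective _ hg)).symm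
    _ = n^2 := by simp [Nat.card_eq_fintype_card, sq]

end Aux

lemma finite_Zi (n : ℕ) (hn : 0 < n) : Finite (Zi n) := by
  have h := card_Zi n hn
  exact Nat.finite_of_card_ne_zero (by rw [h]; positivity)

theorem stmt2 (m : ℕ) (hm : 1 ≤ m) :
    Nat.card (zdVertex (Zi (2 ^ m))) = 2 ^ (2 * m - 1) - 1 := by
  obtain ⟨k, rfl⟩ : ∃ k, m = k + 1 := ⟨m - 1, by omega⟩
  set m := k + 1 with hmdef
  have hn : (0:ℕ) < 2 ^ m := pow_pos (by norm_num) m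
  haveI : Finite (Zi (2^m)) := finite_Zi _ hn
  have hcast : (((2^m : ℕ) : GaussianInt)) = (2 : GaussianInt)^m := by push_cast; ring
  -- the ring hom to ZMod 2
  have hker : ∀ a ∈ Ideal.span ({((2^m : ℕ) : GaussianInt)} : Set GaussianInt), phi2 a = 0 := by
    intro a ha
    rw [Ideal.mem_span_singleton] at ha
    obtain ⟨t, rfl⟩ := ha
    rw [map_mul]
    have h0 : phi2 (((2^m : ℕ) : GaussianInt)) = 0 := by
      rw [hcast, map_pow]
      have : phi2 (2 : GaussianInt) = 0 := by
        show (((2:GaussianInt).re + (2:GaussianInt).im : ℤ) : ZMod 2) = 0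
        decide
      rw [this, zero_pow (by omega)]
    rw [h0, zero_mul]
  set chi : Zi (2^m) →+* ZMod 2 := Ideal.Quotient.lift _ phi2 hker with hchi
  have chi_mk : ∀ a : GaussianInt, chi (Ideal.Quotient.mk _ a) = phi2 a := fun a =>
    Ideal.Quotient.lift_mk _ _ _
  have hsurj : Function.Surjective chi := by
    intro c
    fin_cases c
    · exact ⟨0, map_zero chi⟩
    · exact ⟨Ideal.Quotient.mk _ 1, by rw [chi_mk, map_one]; rfl⟩
  -- characterization of zero divisors
  have hchar : zdVertex (Zi (2^m)) = (chi.toAddMonoidHom.ker : Set (Zi (2^m))) \ {0} := by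
    ext x
    simp only [zdVertex, Set.mem_setOf_eq, Set.mem_diff, Set.mem_singleton_iff, SetLike.mem_coe,
      AddMonoidHom.mem_ker, RingHom.toAddMonoidHom_eq_coe, AddMonoidHom.coe_coe]
    constructor
    · rintro ⟨hx0, y, hy0, hxy⟩
      refine ⟨?_, hx0⟩
      obtain ⟨a, rfl⟩ := Ideal.Quotient.mk_surjective x
      obtain ⟨b, rfl⟩ := Ideal.Quotient.mk_surjective y
      rw [← map_mul, Ideal.Quotient.eq_zero_iff_mem, Ideal.mem_span_singleton, hcast] at hxy
      have hdd : (⟨1,1⟩ : GaussianInt)^(2*m) ∣ a * b := ((assoc_pow m).symm.dvd).trans hxy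
      by_contra hne
      have hnd : ¬ (⟨1,1⟩ : GaussianInt) ∣ a := by
        rw [← phi2_eq_zero_iff]
        rw [chi_mk] at hne
        exact hne
      have hb : (⟨1,1⟩ : GaussianInt)^(2*m) ∣ b :=
        prime_onePlusI.pow_dvd_of_dvd_mul_left _ hnd hdd
      have hb2 : ((2^m : ℕ) : GaussianInt) ∣ b := by
        rw [hcast]
        exact (assoc_pow m).dvd.trans hb
      exact hy0 (by rwa [Ideal.Quotient.eq_zero_iff_mem, Ideal.mem_span_singleton])
    · rintro ⟨hker0, hx0⟩
      refine ⟨hx0, ?_⟩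
      obtain ⟨a, rfl⟩ := Ideal.Quotient.mk_surjective x
      rw [chi_mk, phi2_eq_zero_iff] at hker0
      obtain ⟨w, rfl⟩ := hker0
      refine ⟨Ideal.Quotient.mk _ ((2 : GaussianInt)^k * ⟨1,-1⟩), ?_, ?_⟩
      · rw [Ne, Ideal.Quotient.eq_zero_iff_mem, Ideal.mem_span_singleton, hcast]
        rintro ⟨t, ht⟩
        have h2 : (2 : GaussianInt) * t = ⟨1,-1⟩ := by
          have hk0 : (2 : GaussianInt)^k ≠ 0 := pow_ne_zero k two_ne_zero
          apply mul_left_cancel₀ hk0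
          rw [← mul_assoc, ← pow_succ]
          exact ht.symm
        have : ((2:ℤ) : GaussianInt) ∣ (⟨1,-1⟩ : GaussianInt) := ⟨t, by exact_mod_cast h2.symm⟩
        rw [Zsqrtd.intCast_dvd] at this
        norm_num at this
      · rw [← map_mul, Ideal.Quotient.eq_zero_iff_mem, Ideal.mem_span_singleton, hcast]
        refine ⟨w, ?_⟩
        linear_combination ((2:GaussianInt)^k * w) * mul_onePlusI_conj
  -- cardinality of the kernel
  have hq : Nat.card (Zi (2^m) ⧸ chi.toAddMonoidHom.ker) = 2 := by
    rw [Nat.card_congr (QuotientAddGroup.quotientKerEquivOfSurjective chi.toAddMonoidHom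
      (by exact hsurj)).toEquiv]
    simp [Nat.card_eq_fintype_card]
  have htot : Nat.card (Zi (2^m)) = 2 ^ (2*m) := by
    rw [card_Zi _ hn, ← pow_mul, mul_comm]
  have hK : Nat.card chi.toAddMonoidHom.ker = 2 ^ (2*m - 1) := by
    have := AddSubgroup.card_eq_card_quotient_mul_card_addSubgroup chi.toAddMonoidHom.ker
    rw [htot, hq] at this
    have h2m : 2 ^ (2*m) = 2 * 2 ^ (2*m - 1) := by
      rw [← pow_succ']
      congr 1
    omega
  -- finish
  rw [Nat.card_coe_set_eq, hchar,
    Set.ncard_diff_singleton_of_mem (by simp [AddMonoidHom.mem_ker])]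
  rw [← Nat.card_coe_set_eq]
  have : Nat.card ((chi.toAddMonoidHom.ker : Set (Zi (2^m)))) = Nat.card chi.toAddMonoidHom.ker := rfl
  rw [this, hK]
end

section
/- Let q be a prime with q ≡ 3 (mod 4) and m ≥ 1. The zero-divisor graph Γ(ℤ_{q^m}[i]) is pancyclic if and only if m = 2. -/
open SimpleGraph

namespace Aux
variable {V : Type*} {G : SimpleGraph V}

lemma exists_path_of_list (hG : ∀ x y : V, x ≠ y → G.Adj x y) :
    ∀ (l : List V) (a : V), (a :: l).Nodup →
      ∃ p : G.Walk a ((a :: l).getLast (List.cons_ne_nil a l)), p.support = a :: l := by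
  intro l
  induction l with
  | nil => intro a _; exact ⟨Walk.nil, rfl⟩
  | cons b t ih =>
      intro a hnd
      have hnd' : (b :: t).Nodup := hnd.of_cons
      obtain ⟨p, hp⟩ := ih b hnd'
      have hab : a ≠ b := by
        intro h; subst h; exact (List.nodup_cons.1 hnd).1 List.mem_cons_self
      refine ⟨(Walk.cons (hG a b hab) p).copy rfl ?_, ?_⟩
      · exact (List.getLast_cons (List.cons_ne_nil b t)).symm
      · simp [hp]

lemma complete_hasCycleLength [Finite V] (hG : ∀ x y : V, x ≠ y → G.Adj x y)
    (k : ℕ) (h3 : 3 ≤ k) (hk : k ≤ Nat.card V) : HasCycleLength G k := by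
  classical
  have : Fintype V := Fintype.ofFinite V
  -- get a nodup list of length k
  obtain ⟨f⟩ : Nonempty (Fin k ↪ V) := by
    apply Function.Embedding.nonempty_of_card_le
    simpa [Nat.card_eq_fintype_card] using hk
  set l : List V := (List.finRange k).map f with hl
  have hlnd : l.Nodup := (List.nodup_finRange k).map f.injective
  have hln : l.length = k := by simp [hl]
  -- destructure l as a :: b :: t
  clear_value l
  rcases l with _ | ⟨a, l1⟩
  · simp at hln; omega
  rcases l1 with _ | ⟨b, t⟩
  · simp at hln; omega
  have htne : t ≠ [] := by
    intro h; subst h; simp at hln; omega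
  obtain ⟨p, hp⟩ := exists_path_of_list hG t b hlnd.of_cons
  revert hp
  generalize hgc : (b :: t).getLast (List.cons_ne_nil b t) = c at p
  intro hp
  have hct : c ∈ t := by
    rw [← hgc, List.getLast_cons htne]
    exact List.getLast_mem htne
  have hcmem : c ∈ p.support := by rw [hp]; exact List.mem_cons_of_mem _ hct
  have hanp : a ∉ p.support := by
    rw [hp]; exact (List.nodup_cons.1 hlnd).1
  have hca : c ≠ a := fun h => hanp (h ▸ hcmem)
  have hqs : (p.concat (hG c a hca)).support = p.support ++ [a] := by
    rw [Walk.support_concat]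
  have hqpath : (p.concat (hG c a hca)).IsPath := by
    apply Walk.IsPath.mk'
    rw [hqs]
    refine List.Nodup.append ?_ (List.nodup_singleton a) ?_
    · rw [hp]; exact hlnd.of_cons
    · intro x hx hx'
      rw [List.mem_singleton] at hx'
      subst hx'
      exact hanp hx
  have hbt : b ∉ t := (List.nodup_cons.1 hlnd.of_cons).1
  have hbc : b ≠ c := fun h => hbt (h ▸ hct)
  have hedge : s(a, b) ∉ (p.concat (hG c a hca)).edges := by
    rw [Walk.edges_concat, List.concat_eq_append, List.mem_append]
    rintro (h | h)
    · exact hanp (Walk.fst_mem_support_of_mem_edges p h)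
    · rw [List.mem_singleton, Sym2.eq_iff] at h
      rcases h with ⟨h1, -⟩ | ⟨-, h2⟩
      · exact hca h1.symm
      · exact hbc h2
  have hab : a ≠ b := by
    intro h; subst h; exact (List.nodup_cons.1 hlnd).1 List.mem_cons_self
  refine ⟨a, Walk.cons (hG a b hab) (p.concat (hG c a hca)), ?_, ?_⟩
  · rw [Walk.cons_isCycle_iff]; exact ⟨hqpath, hedge⟩
  · have hplen : p.support.length = p.length + 1 := p.length_support
    rw [hp] at hplen
    have hln' : t.length + 2 = k := by simpa using hln
    simp only [Walk.length_cons, Walk.length_concat]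
    simp only [List.length_cons] at hplen
    omega

lemma exists_adj_injective [Finite V] (h : HasCycleLength G (Nat.card V))
    (h3 : 3 ≤ Nat.card V) :
    ∃ f : V → V, Function.Injective f ∧ ∀ v, G.Adj v (f v) := by
  classical
  have : Fintype V := Fintype.ofFinite V
  obtain ⟨a, p, hc, hl⟩ := h
  have hsnd : p.darts.map (·.snd) = p.support.tail := p.map_snd_darts
  have hsnd_nodup : (p.darts.map (·.snd)).Nodup := hsnd ▸ hc.support_nodup
  have hfst : p.darts.map (·.fst) = p.support.dropLast := p.map_fst_darts
  -- support structure
  have hse : p.support = a :: p.support.tail := p.support_eq_cons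
  have htne : p.support.tail ≠ [] := by
    intro h
    have h5 := p.length_support
    rw [hse, h, List.length_cons, List.length_nil] at h5
    omega
  have hlast? : p.support.tail.getLast? = some a := by
    have h1 : p.support.getLast? = some a := by
      rw [List.getLast?_eq_getLast p.support_ne_nil, p.getLast_support]
    rcases ht : p.support.tail with _ | ⟨b, ts⟩
    · exact absurd ht htne
    · rw [hse, ht, List.getLast?_cons_cons] at h1
      exact h1
  -- dropLast nodup
  have hfst_nodup : (p.darts.map (·.fst)).Nodup := by
    rw [hfst, hse]
    rcases ht : p.support.tail with _ | ⟨b, t⟩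
    · exact absurd ht htne
    · rw [List.dropLast_cons₂]
      rw [List.nodup_cons]
      constructor
      · intro hmem
        have hrw := List.dropLast_concat_getLast (l := b :: t) (by simp)
        have hnd : (b :: t).Nodup := ht ▸ hc.support_nodup
        have hglast : (b :: t).getLast (by simp) = a := by
          have := hlast?
          rw [ht, List.getLast?_eq_getLast (List.cons_ne_nil b t)] at this
          exact Option.some_injective _ this
        rw [← hrw, hglast] at hnd
        rw [List.nodup_append] at hnd
        exact hnd.2.2 a hmem a (List.mem_singleton_self a) rfl
      · exact (ht ▸ hc.support_nodup : (b :: t).Nodup).sublist (List.dropLast_sublist _)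
  -- coverage
  have hcov : ∀ v : V, v ∈ p.darts.map (·.fst) := by
    have hlen : (p.darts.map (·.fst)).length = Fintype.card V := by
      rw [List.length_map, p.length_darts, hl, Nat.card_eq_fintype_card]
    intro v
    have := List.toFinset_card_of_nodup hfst_nodup
    have huniv : (p.darts.map (·.fst)).toFinset = Finset.univ := by
      apply Finset.eq_univ_of_card
      rw [this, hlen]
    rw [← List.mem_toFinset, huniv]
    exact Finset.mem_univ v
  have hex : ∀ v : V, ∃ d, d ∈ p.darts ∧ d.fst = v := by
    intro v
    obtain ⟨d, hd, hdv⟩ := List.mem_map.1 (hcov v)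
    exact ⟨d, hd, hdv⟩
  choose d hd hdfst using hex
  refine ⟨fun v => (d v).snd, ?_, ?_⟩
  · intro u v huv
    have hdd : d u = d v :=
      List.inj_on_of_nodup_map hsnd_nodup (hd u) (hd v) huv
    rw [← hdfst u, ← hdfst v, hdd]
  · intro v
    have := (d v).adj
    rwa [hdfst v] at this

end Aux

namespace AuxR

lemma sub_val_dvd (n : ℕ) [NeZero n] (t : ℤ) : (n : ℤ) ∣ (((t : ZMod n).val : ℤ) - t) := by
  rw [← ZMod.intCast_zmod_eq_zero_iff_dvd]
  push_cast
  rw [ZMod.natCast_val, ZMod.cast_id]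
  simp

lemma val_eq_of_dvd {n : ℕ} [NeZero n] {x y : ZMod n}
    (h : (n : ℤ) ∣ ((x.val : ℤ) - (y.val : ℤ))) : x = y := by
  have h2 := (ZMod.intCast_zmod_eq_zero_iff_dvd _ n).2 h
  push_cast at h2
  rw [ZMod.natCast_val, ZMod.natCast_val, ZMod.cast_id, ZMod.cast_id, sub_eq_zero] at h2
  exact h2

lemma mkZi_eq_mkZi {n : ℕ} {z w : GaussianInt} :
    Ideal.Quotient.mk (Ideal.span ({(n : GaussianInt)} : Set GaussianInt)) z =
      Ideal.Quotient.mk _ w ↔ (n : GaussianInt) ∣ z - w := by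
  rw [Ideal.Quotient.eq, Ideal.mem_span_singleton]

lemma mkZi_eq_zero {n : ℕ} {z : GaussianInt} :
    Ideal.Quotient.mk (Ideal.span ({(n : GaussianInt)} : Set GaussianInt)) z = 0 ↔
      (n : GaussianInt) ∣ z := by
  rw [Ideal.Quotient.eq_zero_iff_mem, Ideal.mem_span_singleton]

lemma natCast_dvd_iff (n : ℕ) (z : GaussianInt) :
    (n : GaussianInt) ∣ z ↔ (n : ℤ) ∣ z.re ∧ (n : ℤ) ∣ z.im := by
  rw [← Zsqrtd.intCast_dvd (n : ℤ) z]
  norm_cast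

/-- The elements of `ZMod n × ZMod n` biject with `Zi n` via `(x, y) ↦ x + y i`. -/
lemma mkZi_val_surjective (n : ℕ) [NeZero n] :
    Function.Surjective (fun x : ZMod n × ZMod n =>
      Ideal.Quotient.mk (Ideal.span ({(n : GaussianInt)} : Set GaussianInt))
        (⟨(x.1.val : ℤ), (x.2.val : ℤ)⟩ : GaussianInt)) := by
  intro r
  obtain ⟨z, rfl⟩ := Ideal.Quotient.mk_surjective r
  refine ⟨((z.re : ZMod n), (z.im : ZMod n)), ?_⟩
  rw [mkZi_eq_mkZi, natCast_dvd_iff]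
  exact ⟨sub_val_dvd n z.re, sub_val_dvd n z.im⟩

instance finiteZi (n : ℕ) [NeZero n] : Finite (Zi n) :=
  Finite.of_surjective _ (mkZi_val_surjective n)

lemma card_dvd_set (N a dd : ℕ) (hN : N = a * dd) (ha : a ≠ 0) (hdd : dd ≠ 0) :
    Nat.card {r : Zi N | Ideal.Quotient.mk (Ideal.span ({(N : GaussianInt)} : Set GaussianInt))
      (a : GaussianInt) ∣ r} = dd ^ 2 := by
  haveI : NeZero dd := ⟨hdd⟩
  have haZ : (a : GaussianInt) ≠ 0 := Nat.cast_ne_zero.2 ha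
  have hNZ : (N : GaussianInt) = (a : GaussianInt) * (dd : GaussianInt) := by
    rw [hN]; push_cast; ring
  set I := Ideal.span ({(N : GaussianInt)} : Set GaussianInt) with hI
  set π := Ideal.Quotient.mk I with hπ
  set F : ZMod dd × ZMod dd → {r : Zi N | π (a : GaussianInt) ∣ r} := fun x =>
    ⟨π ((a : GaussianInt) * ⟨(x.1.val : ℤ), (x.2.val : ℤ)⟩),
      ⟨π (⟨(x.1.val : ℤ), (x.2.val : ℤ)⟩ : GaussianInt), by rw [map_mul]⟩⟩ with hF
  have hFbij : Function.Bijective F := by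
    constructor
    · intro x y hxy
      have h1 : π ((a : GaussianInt) * ⟨(x.1.val : ℤ), (x.2.val : ℤ)⟩) =
          π ((a : GaussianInt) * ⟨(y.1.val : ℤ), (y.2.val : ℤ)⟩) := congrArg Subtype.val hxy
      rw [hπ, mkZi_eq_mkZi, hNZ, ← mul_sub, mul_dvd_mul_iff_left haZ, natCast_dvd_iff] at h1
      simp only [Zsqrtd.re_sub, Zsqrtd.im_sub] at h1
      exact Prod.ext (val_eq_of_dvd h1.1) (val_eq_of_dvd h1.2)
    · rintro ⟨r, hr⟩
      obtain ⟨u, hu⟩ := hr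
      obtain ⟨w, rfl⟩ := Ideal.Quotient.mk_surjective u
      refine ⟨((w.re : ZMod dd), (w.im : ZMod dd)), ?_⟩
      apply Subtype.ext
      show π _ = r
      rw [hu, ← map_mul, hπ, mkZi_eq_mkZi, hNZ, ← mul_sub]
      apply mul_dvd_mul_left
      rw [natCast_dvd_iff]
      exact ⟨sub_val_dvd dd w.re, sub_val_dvd dd w.im⟩
  calc Nat.card {r : Zi N | π (a : GaussianInt) ∣ r}
      = Nat.card (ZMod dd × ZMod dd) := (Nat.card_eq_of_bijective F hFbij).symm
    _ = dd ^ 2 := by rw [Nat.card_prod, Nat.card_zmod]; ring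



section Main

variable (q m : ℕ)

/-- abbreviation for the quotient map -/
noncomputable abbrev piQ : GaussianInt →+* Zi (q ^ m) :=
  Ideal.Quotient.mk (Ideal.span ({((q ^ m : ℕ) : GaussianInt)} : Set GaussianInt))

lemma cast_qm_eq : (((q ^ m : ℕ)) : GaussianInt) = ((q : ℕ) : GaussianInt) ^ m := by
  push_cast; ring

lemma piQ_qm : piQ q m (((q : ℕ) : GaussianInt) ^ m) = 0 := by
  rw [← cast_qm_eq, mkZi_eq_zero]

lemma mk_pow_dvd_iff {k : ℕ} (hk : k ≤ m) (z : GaussianInt) :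
    piQ q m (((q : ℕ) : GaussianInt) ^ k) ∣ piQ q m z ↔ ((q : ℕ) : GaussianInt) ^ k ∣ z := by
  constructor
  · rintro ⟨u, hu⟩
    obtain ⟨w, rfl⟩ := Ideal.Quotient.mk_surjective u
    rw [← map_mul] at hu
    rw [show (piQ q m z) = Ideal.Quotient.mk _ z from rfl, mkZi_eq_mkZi (n := q ^ m), cast_qm_eq] at hu
    obtain ⟨t, ht⟩ := hu
    have : z = ((q : ℕ) : GaussianInt) ^ k * w + ((q : ℕ) : GaussianInt) ^ m * t := by
      rw [← ht]; ring
    rw [this]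
    exact dvd_add (dvd_mul_right _ _) (dvd_mul_of_dvd_left (pow_dvd_pow _ hk) t)
  · rintro ⟨w, rfl⟩
    exact ⟨piQ q m w, (map_mul (piQ q m) _ _).symm⟩

lemma zdV_char (hq : q.Prime) (h3 : q % 4 = 3) (hm : 1 ≤ m) :
    zdVertex (Zi (q ^ m)) =
      {r : Zi (q ^ m) | piQ q m ((q : ℕ) : GaussianInt) ∣ r} \ {0} := by
  haveI := Fact.mk hq
  have hp : Prime ((q : ℕ) : GaussianInt) :=
    (GaussianInt.prime_iff_mod_four_eq_three_of_nat_prime q).2 h3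
  ext r
  constructor
  · rintro ⟨hr0, y, hy0, hxy⟩
    obtain ⟨z, rfl⟩ := Ideal.Quotient.mk_surjective r
    obtain ⟨w, rfl⟩ := Ideal.Quotient.mk_surjective y
    refine ⟨?_, hr0⟩
    rw [← map_mul] at hxy
    have hzw : ((q : ℕ) : GaussianInt) ^ m ∣ z * w := by
      rw [← cast_qm_eq]
      exact (mkZi_eq_zero (n := q ^ m)).1 hxy
    have hw : ¬ ((q : ℕ) : GaussianInt) ^ m ∣ w := by
      rw [← cast_qm_eq]
      exact fun h => hy0 ((mkZi_eq_zero (n := q ^ m)).2 h)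
    have hz : ((q : ℕ) : GaussianInt) ∣ z := by
      by_contra hnz
      exact hw (hp.pow_dvd_of_dvd_mul_left m hnz hzw)
    obtain ⟨t, rfl⟩ := hz
    exact ⟨Ideal.Quotient.mk _ t, (map_mul (piQ q m) _ _).symm⟩
  · rintro ⟨⟨u, hu⟩, hr0⟩
    refine ⟨hr0, piQ q m (((q : ℕ) : GaussianInt) ^ (m - 1)), ?_, ?_⟩
    · rw [Ne, mkZi_eq_zero, cast_qm_eq]
      rw [pow_dvd_pow_iff hp.ne_zero hp.not_unit]
      omega
    · obtain ⟨w, rfl⟩ := Ideal.Quotient.mk_surjective u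
      rw [hu]
      have : (piQ q m) ((q : ℕ) : GaussianInt) * (Ideal.Quotient.mk _ w) *
          piQ q m (((q : ℕ) : GaussianInt) ^ (m - 1)) =
          piQ q m (((q : ℕ) : GaussianInt) ^ m) * piQ q m w := by
        rw [← map_mul, ← map_mul, ← map_mul]
        congr 1
        have : ((q : ℕ) : GaussianInt) * ((q : ℕ) : GaussianInt) ^ (m - 1) =
            ((q : ℕ) : GaussianInt) ^ m := by
          rw [← pow_succ']
          congr 1
          omega
        rw [← this]; ring
      rw [this, piQ_qm, zero_mul]

lemma card_Sk (hq : q.Prime) {k : ℕ} (hk : k ≤ m) :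
    Nat.card {r : Zi (q ^ m) | piQ q m (((q : ℕ) : GaussianInt) ^ k) ∣ r} =
      q ^ (2 * (m - k)) := by
  have h := card_dvd_set (q ^ m) (q ^ k) (q ^ (m - k))
    (by rw [← pow_add]; congr 1; omega)
    (pow_ne_zero _ hq.ne_zero) (pow_ne_zero _ hq.ne_zero)
  have hset : {r : Zi (q ^ m) | piQ q m (((q : ℕ) : GaussianInt) ^ k) ∣ r} =
      {r : Zi (q ^ m) | Ideal.Quotient.mk (Ideal.span ({((q ^ m : ℕ) : GaussianInt)} :
        Set GaussianInt)) (((q ^ k : ℕ)) : GaussianInt) ∣ r} := by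
    ext r
    simp only [Set.mem_setOf_eq, Nat.cast_pow]
  rw [hset, h, ← pow_mul]
  congr 1
  omega

end Main
end AuxR


theorem stmt3 (q m : ℕ) (hq : q.Prime) (h3 : q % 4 = 3) (hm : 1 ≤ m) :
    Pancyclic (zdGraph (Zi (q ^ m))) ↔ m = 2 := by
  classical
  haveI := Fact.mk hq
  have hp : Prime ((q : ℕ) : GaussianInt) :=
    (GaussianInt.prime_iff_mod_four_eq_three_of_nat_prime q).2 h3
  haveI : NeZero (q ^ m) := ⟨pow_ne_zero _ hq.pos.ne'⟩
  have hq3 : 3 ≤ q := by omega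
  have hq9 : 9 ≤ q ^ 2 := by
    calc (9 : ℕ) = 3 ^ 2 := by norm_num
    _ ≤ q ^ 2 := Nat.pow_le_pow_left hq3 2
  have hzd : zdVertex (Zi (q ^ m)) =
      {r : Zi (q ^ m) | AuxR.piQ q m ((q : ℕ) : GaussianInt) ∣ r} \ {0} :=
    AuxR.zdV_char q m hq h3 hm
  have hSk : ∀ k : ℕ, k ≤ m →
      Nat.card {r : Zi (q ^ m) | AuxR.piQ q m (((q : ℕ) : GaussianInt) ^ k) ∣ r} =
        q ^ (2 * (m - k)) := fun k hk => AuxR.card_Sk q m hq hk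
  have hS1 : Nat.card {r : Zi (q ^ m) | AuxR.piQ q m ((q : ℕ) : GaussianInt) ∣ r} =
      q ^ (2 * (m - 1)) := by
    have := hSk 1 hm
    rwa [pow_one] at this
  have hcard : Nat.card (zdVertex (Zi (q ^ m))) = q ^ (2 * (m - 1)) - 1 := by
    have h0 : (0 : Zi (q ^ m)) ∈ {r : Zi (q ^ m) | AuxR.piQ q m ((q : ℕ) : GaussianInt) ∣ r} :=
      dvd_zero _
    rw [Nat.card_coe_set_eq, hzd, Set.ncard_diff_singleton_of_mem h0,
      ← Nat.card_coe_set_eq, hS1]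
  constructor
  · intro hpan
    by_contra hne
    rcases Nat.lt_or_ge m 3 with hlt | hge
    · have hm1 : m = 1 := by omega
      subst hm1
      have := hpan.1
      rw [hcard] at this
      simp at this
    · -- m ≥ 3 : no Hamiltonian cycle
      have hn3 := hpan.1
      obtain ⟨f, hfinj, hfadj⟩ :=
        Aux.exists_adj_injective (hpan.2 _ hn3 le_rfl) hn3
      set qZ : GaussianInt := ((q : ℕ) : GaussianInt) with hqZ
      set S1 : Set (Zi (q ^ m)) := {r | AuxR.piQ q m (qZ ^ 1) ∣ r} with hS1def
      set S2 : Set (Zi (q ^ m)) := {r | AuxR.piQ q m (qZ ^ 2) ∣ r} with hS2def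
      set Sm : Set (Zi (q ^ m)) := {r | AuxR.piQ q m (qZ ^ (m - 1)) ∣ r} with hSmdef
      have hAzd : ∀ x ∈ S1 \ S2, x ∈ zdVertex (Zi (q ^ m)) := by
        intro x hx
        rw [hzd]
        refine ⟨?_, ?_⟩
        · have := hx.1
          rwa [hS1def, Set.mem_setOf_eq, pow_one] at this
        · intro h0
          rw [Set.mem_singleton_iff] at h0
          exact hx.2 (by rw [hS2def, Set.mem_setOf_eq, h0]; exact dvd_zero _)
      have hmem : ∀ x : (S1 \ S2 : Set (Zi (q ^ m))),
          ((f ⟨x.1, hAzd _ x.2⟩ : zdVertex (Zi (q ^ m))) : Zi (q ^ m)) ∈ Sm \ {0} := by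
        rintro ⟨x, hx⟩
        set v := f ⟨x, hAzd _ hx⟩ with hv
        have hadj := hfadj ⟨x, hAzd _ hx⟩
        have hprod : x * (v : Zi (q ^ m)) = 0 := (show _ ∧ _ from hadj).2
        have hvne : (v : Zi (q ^ m)) ≠ 0 := v.2.1
        constructor
        · -- divisibility
          obtain ⟨z, hz⟩ := Ideal.Quotient.mk_surjective (I := Ideal.span
            ({((q ^ m : ℕ) : GaussianInt)} : Set GaussianInt)) x
          obtain ⟨w, hw⟩ := Ideal.Quotient.mk_surjective (I := Ideal.span
            ({((q ^ m : ℕ) : GaussianInt)} : Set GaussianInt)) (v : Zi (q ^ m))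
          have hx1 : qZ ^ 1 ∣ z := by
            have := hx.1
            rw [hS1def, Set.mem_setOf_eq, ← hz] at this
            exact (AuxR.mk_pow_dvd_iff q m hm z).1 this
          have hx2 : ¬ qZ ^ 2 ∣ z := by
            intro hdvd
            exact hx.2 (by
              rw [hS2def, Set.mem_setOf_eq, ← hz]
              exact (AuxR.mk_pow_dvd_iff q m (by omega) z).2 hdvd)
          have hzw : qZ ^ m ∣ z * w := by
            rw [← AuxR.cast_qm_eq q m, ← AuxR.mkZi_eq_zero]
            show AuxR.piQ q m (z * w) = 0
            rw [map_mul, hz, hw]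
            exact hprod
          rw [pow_one] at hx1
          obtain ⟨z', rfl⟩ := hx1
          have hz' : ¬ qZ ∣ z' := by
            rintro ⟨t, ht⟩
            exact hx2 ⟨t, by rw [ht]; ring⟩
          have hcancel : qZ ^ (m - 1) ∣ z' * w := by
            have h1 : qZ * (qZ ^ (m - 1)) ∣ qZ * (z' * w) := by
              have : qZ * qZ ^ (m - 1) = qZ ^ m := by
                rw [← pow_succ']
                congr 1
                omega
              rw [this]
              have : qZ * z' * w = qZ * (z' * w) := by ring
              rwa [this] at hzw
            exact (mul_dvd_mul_iff_left hp.ne_zero).1 h1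
          have hww : qZ ^ (m - 1) ∣ w := hp.pow_dvd_of_dvd_mul_left (m - 1) hz' hcancel
          rw [hSmdef, Set.mem_setOf_eq, ← hw]
          exact (AuxR.mk_pow_dvd_iff q m (by omega) w).2 hww
        · exact hvne
      have hle : Nat.card (S1 \ S2 : Set (Zi (q ^ m))) ≤
          Nat.card (Sm \ {0} : Set (Zi (q ^ m))) := by
        apply Nat.card_le_card_of_injective
          (fun x : (S1 \ S2 : Set (Zi (q ^ m))) =>
            (⟨_, hmem x⟩ : (Sm \ {0} : Set (Zi (q ^ m)))))
        rintro ⟨x, hx⟩ ⟨y, hy⟩ hxy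
        simp only [Subtype.mk.injEq] at hxy
        have h2 : f ⟨x, hAzd _ hx⟩ = f ⟨y, hAzd _ hy⟩ := Subtype.ext hxy
        have h4 : x = y := congrArg Subtype.val (hfinj h2)
        exact Subtype.ext h4
      -- compute cardinalities
      have hsub : S2 ⊆ S1 := by
        rintro r ⟨u, hu⟩
        refine ⟨AuxR.piQ q m qZ * u, ?_⟩
        have hqsq : qZ ^ 2 = qZ ^ 1 * qZ := by ring
        rw [hu, hqsq, map_mul, mul_assoc]
      have hcA : Nat.card (S1 \ S2 : Set (Zi (q ^ m))) =
          q ^ (2 * (m - 1)) - q ^ (2 * (m - 2)) := by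
        rw [Nat.card_coe_set_eq, Set.ncard_diff hsub,
          ← Nat.card_coe_set_eq, ← Nat.card_coe_set_eq,
          hSk 1 hm, hSk 2 (by omega)]
      have hcB : Nat.card (Sm \ {0} : Set (Zi (q ^ m))) = q ^ 2 - 1 := by
        have h0 : (0 : Zi (q ^ m)) ∈ Sm := dvd_zero _
        rw [Nat.card_coe_set_eq, Set.ncard_diff_singleton_of_mem h0,
          ← Nat.card_coe_set_eq, hSk (m - 1) (by omega)]
        congr 2
        omega
      rw [hcA, hcB] at hle
      -- numeric contradiction
      have h1 : 2 * (m - 1) = 2 * (m - 2) + 2 := by omega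
      have h2 : q ^ (2 * (m - 2) + 2) = q ^ (2 * (m - 2)) * q ^ 2 := pow_add _ _ _
      have hX2 : q ^ 2 ≤ q ^ (2 * (m - 2)) :=
        Nat.pow_le_pow_right hq.pos (by omega)
      have hXY : 2 * q ^ (2 * (m - 2)) ≤ q ^ (2 * (m - 2)) * q ^ 2 := by
        calc 2 * q ^ (2 * (m - 2)) = q ^ (2 * (m - 2)) * 2 := by ring
        _ ≤ q ^ (2 * (m - 2)) * q ^ 2 := Nat.mul_le_mul_left _ (by omega)
      rw [h1, h2] at hle
      set X := q ^ (2 * (m - 2)) with hX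
      set Y := q ^ 2 with hY
      set Z := X * Y with hZ
      omega
  · rintro rfl
    have hcard2 : Nat.card (zdVertex (Zi (q ^ 2))) = q ^ 2 - 1 := by
      rw [hcard]
    constructor
    · rw [hcard2]; omega
    · intro k hk3 hkcard
      refine Aux.complete_hasCycleLength ?_ k hk3 hkcard
      intro x y hxy
      refine (show x ≠ y ∧ (x : Zi (q ^ 2)) * y = 0 from ⟨hxy, ?_⟩)
      have hx : (x : Zi (q ^ 2)) ∈ ({r : Zi (q ^ 2) | AuxR.piQ q 2 ((q : ℕ) : GaussianInt) ∣ r} \ {0}) := by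
        rw [← hzd]; exact x.2
      have hy : (y : Zi (q ^ 2)) ∈ ({r : Zi (q ^ 2) | AuxR.piQ q 2 ((q : ℕ) : GaussianInt) ∣ r} \ {0}) := by
        rw [← hzd]; exact y.2
      obtain ⟨⟨u, hu⟩, -⟩ := hx
      obtain ⟨⟨v, hv⟩, -⟩ := hy
      show (x : Zi (q ^ 2)) * (y : Zi (q ^ 2)) = 0
      rw [hu, hv]
      have hqq : AuxR.piQ q 2 ((q : ℕ) : GaussianInt) *
          AuxR.piQ q 2 ((q : ℕ) : GaussianInt) =
          AuxR.piQ q 2 (((q : ℕ) : GaussianInt) ^ 2) := by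
        rw [← map_mul, ← sq]
      calc AuxR.piQ q 2 ((q : ℕ) : GaussianInt) * u *
          (AuxR.piQ q 2 ((q : ℕ) : GaussianInt) * v)
          = AuxR.piQ q 2 ((q : ℕ) : GaussianInt) *
            AuxR.piQ q 2 ((q : ℕ) : GaussianInt) * (u * v) := by ring
        _ = AuxR.piQ q 2 (((q : ℕ) : GaussianInt) ^ 2) * (u * v) := by rw [hqq]
        _ = 0 := by rw [AuxR.piQ_qm q 2, zero_mul]
end

section
/- If q is a prime with q ≡ 3 (mod 4), then Γ(ℤ_{q^2}[i]) is the complete graph on q^2 − 1 vertices. -/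
open SimpleGraph

/-! ### Auxiliary material -/

/-- `ℤ[i]/(n)` is in bijection with `ZMod n × ZMod n`. -/
noncomputable def ziEquiv (n : ℕ) : Zi n ≃ ZMod n × ZMod n := by
  refine Equiv.ofBijective (Quotient.lift (fun x : GaussianInt => ((x.re : ZMod n), (x.im : ZMod n))) ?_) ⟨?_, ?_⟩
  · intro a b hab
    replace hab : a - b ∈ Ideal.span {(n : GaussianInt)} := (Submodule.quotientRel_def _).mp hab
    rw [Ideal.mem_span_singleton] at hab
    have h2 : (n:ℤ) ∣ (a-b).re ∧ (n:ℤ) ∣ (a-b).im := by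
      rw [← Zsqrtd.intCast_dvd]; exact_mod_cast hab
    have hre : ((a.re : ZMod n)) = b.re := by
      have := (ZMod.intCast_zmod_eq_zero_iff_dvd _ n).mpr h2.1
      push_cast [Zsqrtd.re_sub] at this ⊢
      linear_combination this
    have him : ((a.im : ZMod n)) = b.im := by
      have := (ZMod.intCast_zmod_eq_zero_iff_dvd _ n).mpr h2.2
      push_cast [Zsqrtd.im_sub] at this ⊢
      linear_combination this
    simp [hre, him]
  · intro x y h
    obtain ⟨a, rfl⟩ := Ideal.Quotient.mk_surjective x
    obtain ⟨b, rfl⟩ := Ideal.Quotient.mk_surjective y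
    have h' : ((a.re : ZMod n), (a.im : ZMod n)) = ((b.re : ZMod n), (b.im : ZMod n)) := h
    rw [Prod.mk.injEq] at h'
    rw [Ideal.Quotient.eq, Ideal.mem_span_singleton]
    have h1 : (n:ℤ) ∣ (a-b).re := by
      rw [Zsqrtd.re_sub, ← ZMod.intCast_zmod_eq_zero_iff_dvd]
      push_cast
      linear_combination h'.1
    have h2 : (n:ℤ) ∣ (a-b).im := by
      rw [Zsqrtd.im_sub, ← ZMod.intCast_zmod_eq_zero_iff_dvd]
      push_cast
      linear_combination h'.2
    have := (Zsqrtd.intCast_dvd (n:ℤ) (a-b)).mpr ⟨h1, h2⟩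
    exact_mod_cast this
  · intro p
    refine ⟨Ideal.Quotient.mk _ ⟨(p.1.cast : ℤ), (p.2.cast : ℤ)⟩, ?_⟩
    show ((_ : ZMod n), (_ : ZMod n)) = p
    simp [ZMod.intCast_zmod_cast]

/-- The multiplication-by-`q` map from `ℤ[i]/(q)` to `ℤ[i]/(q²)`. -/
noncomputable def ziPhi (q : ℕ) : Zi q → Zi (q^2) :=
  Quotient.lift (fun a : GaussianInt => Ideal.Quotient.mk _ ((q : GaussianInt) * a)) (by
    intro a b hab
    replace hab : a - b ∈ Ideal.span {(q : GaussianInt)} := (Submodule.quotientRel_def _).mp hab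
    rw [Ideal.mem_span_singleton] at hab
    obtain ⟨c, hc⟩ := hab
    rw [Ideal.Quotient.eq, Ideal.mem_span_singleton]
    refine ⟨c, ?_⟩
    push_cast
    rw [← mul_sub, hc]
    ring)

lemma ziPhi_mk (q : ℕ) (a : GaussianInt) :
    ziPhi q (Ideal.Quotient.mk _ a) = Ideal.Quotient.mk _ ((q : GaussianInt) * a) := rfl

lemma key_facts (q : ℕ) (hq : q.Prime) (h3 : q % 4 = 3) :
    Prime (q : GaussianInt) ∧ ((q^2 : ℕ) : GaussianInt) = (q : GaussianInt)^2 := by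
  haveI := Fact.mk hq
  refine ⟨(GaussianInt.prime_iff_mod_four_eq_three_of_nat_prime q).mpr h3, by push_cast; ring⟩

lemma zd_char (q : ℕ) (hq : q.Prime) (h3 : q % 4 = 3) (x : Zi (q^2)) (hx : x ∈ zdVertex (Zi (q^2))) :
    ∃ a : GaussianInt, ¬ (q : GaussianInt) ∣ a ∧ x = Ideal.Quotient.mk _ ((q : GaussianInt) * a) := by
  obtain ⟨hp, hcast⟩ := key_facts q hq h3
  obtain ⟨hx0, y, hy0, hxy⟩ := hx
  obtain ⟨c, rfl⟩ := Ideal.Quotient.mk_surjective x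
  obtain ⟨b, rfl⟩ := Ideal.Quotient.mk_surjective y
  rw [← map_mul, Ideal.Quotient.eq_zero_iff_dvd, hcast] at hxy
  have hb : ¬ (q : GaussianInt)^2 ∣ b := by
    rw [← hcast, ← Ideal.Quotient.eq_zero_iff_dvd]; exact hy0
  have hqc : (q : GaussianInt) ∣ c := by
    by_contra hqc
    have h1 : (q : GaussianInt) ∣ c * b := (dvd_pow_self _ two_ne_zero).trans hxy
    have h2 : (q : GaussianInt) ∣ b := ((hp.dvd_mul).mp h1).resolve_left hqc
    obtain ⟨b', rfl⟩ := h2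
    apply hb
    have h3' : (q : GaussianInt) ∣ c * b' := by
      have h5 : (q:GaussianInt)^2 ∣ (q:GaussianInt) * (c * b') := by
        have := hxy; rw [show c * ((q:GaussianInt) * b') = (q:GaussianInt) * (c * b') by ring] at this
        exact this
      rw [pow_two, mul_dvd_mul_iff_left hp.ne_zero] at h5
      exact h5
    rcases (hp.dvd_mul).mp h3' with h | h
    · exact absurd h hqc
    · obtain ⟨b'', rfl⟩ := h
      exact ⟨b'', by ring⟩
  obtain ⟨a, rfl⟩ := hqc
  refine ⟨a, ?_, rfl⟩
  rintro ⟨a', rfl⟩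
  apply hx0
  rw [Ideal.Quotient.eq_zero_iff_dvd, hcast]
  exact ⟨a', by ring⟩

theorem stmt4 (q : ℕ) (hq : q.Prime) (h3 : q % 4 = 3) :
    zdGraph (Zi (q ^ 2)) = ⊤ ∧ Nat.card (zdVertex (Zi (q ^ 2))) = q ^ 2 - 1 := by
  obtain ⟨hp, hcast⟩ := key_facts q hq h3
  constructor
  · ext x y
    show (x ≠ y ∧ (x : Zi (q^2)) * y = 0) ↔ x ≠ y
    constructor
    · exact fun h => h.1
    · intro hxy
      refine ⟨hxy, ?_⟩
      obtain ⟨a, ha, hax⟩ := zd_char q hq h3 x.1 x.2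
      obtain ⟨b, hb, hbx⟩ := zd_char q hq h3 y.1 y.2
      rw [hax, hbx, ← map_mul, Ideal.Quotient.eq_zero_iff_dvd, hcast]
      exact ⟨a*b, by ring⟩
  · haveI : NeZero q := ⟨hq.pos.ne'⟩
    haveI : Finite (Zi q) := Finite.of_equiv _ (ziEquiv q).symm
    have himg : zdVertex (Zi (q^2)) = ziPhi q '' {y : Zi q | y ≠ 0} := by
      ext x
      constructor
      · intro hx
        obtain ⟨a, ha, rfl⟩ := zd_char q hq h3 x hx
        refine ⟨Ideal.Quotient.mk _ a, ?_, rfl⟩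
        rw [Set.mem_setOf_eq, ne_eq, Ideal.Quotient.eq_zero_iff_dvd]
        exact ha
      · rintro ⟨y, hy, rfl⟩
        obtain ⟨a, rfl⟩ := Ideal.Quotient.mk_surjective y
        have ha : ¬ (q:GaussianInt) ∣ a := by
          rw [Set.mem_setOf_eq, ne_eq, Ideal.Quotient.eq_zero_iff_dvd] at hy
          exact hy
        refine ⟨?_, Ideal.Quotient.mk _ (q:GaussianInt), ?_, ?_⟩
        · rw [ziPhi_mk, ne_eq, Ideal.Quotient.eq_zero_iff_dvd, hcast]
          rintro ⟨t, ht⟩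
          apply ha
          refine ⟨t, mul_left_cancel₀ hp.ne_zero ?_⟩
          rw [ht]; ring
        · rw [ne_eq, Ideal.Quotient.eq_zero_iff_dvd, hcast]
          rintro ⟨t, ht⟩
          have h1 : (q:GaussianInt) * 1 = (q:GaussianInt) * ((q:GaussianInt) * t) := by
            rw [mul_one, ← mul_assoc, ← pow_two, ← ht]
          exact hp.not_isUnit (IsUnit.of_mul_eq_one t (mul_left_cancel₀ hp.ne_zero h1).symm)
        · rw [ziPhi_mk, ← map_mul, Ideal.Quotient.eq_zero_iff_dvd, hcast]
          exact ⟨a, by ring⟩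
    have hinj : Function.Injective (ziPhi q) := by
      intro x y h
      obtain ⟨a, rfl⟩ := Ideal.Quotient.mk_surjective x
      obtain ⟨b, rfl⟩ := Ideal.Quotient.mk_surjective y
      rw [ziPhi_mk, ziPhi_mk, Ideal.Quotient.eq, Ideal.mem_span_singleton, hcast] at h
      obtain ⟨t, ht⟩ := h
      rw [Ideal.Quotient.eq, Ideal.mem_span_singleton]
      refine ⟨t, mul_left_cancel₀ hp.ne_zero ?_⟩
      rw [mul_sub, ht]; ring
    have hq2 : Nat.card (Zi q) = q^2 := by
      rw [Nat.card_congr (ziEquiv q), Nat.card_prod, Nat.card_zmod, sq]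
    rw [himg, Nat.card_image_of_injective hinj]
    have hset : ({y : Zi q | y ≠ 0} : Set (Zi q)) = ({0}ᶜ : Set (Zi q)) := by ext y; simp
    have h2 := Set.ncard_add_ncard_compl ({0} : Set (Zi q))
    rw [Set.ncard_singleton, hq2] at h2
    rw [Nat.card_coe_set_eq, hset]
    omega
end

section
/- Let p be a prime with p ≡ 1 (mod 4) and m ≥ 1. The zero-divisor graph Γ(ℤ_{p^m}[i]) is bipancyclic if and only if m = 1. -/
open SimpleGraph

lemma hensel_sq_neg_one (p : ℕ) (hp : p.Prime) (h1 : p % 4 = 1) :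
    ∀ m : ℕ, ∃ c : ℤ, (p : ℤ) ^ m ∣ c ^ 2 + 1 := by
  have hpodd : p ≠ 2 := by omega
  haveI : Fact p.Prime := ⟨hp⟩
  intro m
  induction m with
  | zero => exact ⟨0, by simp⟩
  | succ m ih =>
    rcases Nat.eq_zero_or_pos m with hm0 | hm0
    · subst hm0
      have hsq : IsSquare (-1 : ZMod p) := by
        rw [ZMod.exists_sq_eq_neg_one_iff]; omega
      obtain ⟨y, hy⟩ := hsq
      refine ⟨(y.val : ℤ), ?_⟩
      rw [pow_one, ← ZMod.intCast_zmod_eq_zero_iff_dvd]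
      push_cast
      rw [ZMod.natCast_val, ZMod.cast_id, pow_two, ← hy]
      ring
    · obtain ⟨c, u, hu⟩ := ih
      have hpc : ¬ (p : ℤ) ∣ c := by
        intro hdvd
        have h1' : (p : ℤ) ∣ c ^ 2 + 1 :=
          dvd_trans (dvd_pow_self _ hm0.ne') ⟨u, hu⟩
        have h2 : (p : ℤ) ∣ c ^ 2 := dvd_pow hdvd two_ne_zero
        have h3 : (p : ℤ) ∣ 1 := (dvd_add_right h2).mp h1'
        have h4 := Int.le_of_dvd one_pos h3
        have := hp.two_le
        omega
      have hx : ((2 * c : ℤ) : ZMod p) ≠ 0 := by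
        rw [Ne, ZMod.intCast_zmod_eq_zero_iff_dvd]
        intro hdvd
        rcases (Int.Prime.dvd_mul' (by exact_mod_cast hp) hdvd) with h | h
        · have h2 : (p : ℕ) ∣ 2 := by exact_mod_cast h
          have := Nat.le_of_dvd two_pos h2
          have := hp.two_le
          omega
        · exact hpc h
      obtain ⟨d, hdx⟩ := ZMod.intCast_surjective (((2 * c : ℤ) : ZMod p))⁻¹
      have hd : (p : ℤ) ∣ 2 * c * d - 1 := by
        have : ((2 * c * d - 1 : ℤ) : ZMod p) = 0 := by
          push_cast
          rw [hdx]
          have h2 : ((2 * c : ℤ) : ZMod p) = 2 * (c : ZMod p) := by push_cast; ring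
          rw [← h2, mul_inv_cancel₀ hx, sub_self]
        exact (ZMod.intCast_zmod_eq_zero_iff_dvd _ p).1 this
      obtain ⟨e, he⟩ := hd
      set q : ℤ := (p : ℤ) ^ (m - 1) with hqdef
      have hm' : m - 1 + 1 = m := by omega
      have hq : (p : ℤ) ^ m = q * p := by rw [hqdef, ← pow_succ, hm']
      have hq1 : (p : ℤ) ^ (m + 1) = q * p ^ 2 := by rw [pow_succ, hq]; ring
      rw [hq] at hu
      refine ⟨c + (-u * d) * (q * p), ?_⟩
      rw [hq1]
      refine ⟨-u * e + u ^ 2 * d ^ 2 * q, ?_⟩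
      linear_combination hu + (-(q * p * u)) * he


lemma ziEquiv_s6 (q : ℕ) (c : ZMod q) (hc : c * c = -1)
    (h2 : IsUnit (2 : ZMod q)) (hcu : IsUnit c) :
    Nonempty (Zi q ≃+* ZMod q × ZMod q) := by
  have hroot : ((c, -c) : ZMod q × ZMod q) * (c, -c) = ((-1 : ℤ) : ZMod q × ZMod q) := by
    ext <;> simp [hc]
  let f : GaussianInt →+* ZMod q × ZMod q := Zsqrtd.lift ⟨((c, -c) : ZMod q × ZMod q), hroot⟩
  have hf : ∀ x : GaussianInt, f x = ((x.re : ZMod q) + (x.im : ZMod q) * c,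
      (x.re : ZMod q) - (x.im : ZMod q) * c) := by
    intro x
    show ((x.re : ℤ) : ZMod q × ZMod q) + ((x.im : ℤ) : ZMod q × ZMod q) * (c, -c) = _
    ext <;> simp [sub_eq_add_neg]
  obtain ⟨i2, hi2⟩ := h2.exists_right_inv
  obtain ⟨ic, hic⟩ := hcu.exists_right_inv
  have hsurj : Function.Surjective f := by
    rintro ⟨s, t⟩
    obtain ⟨A, hA⟩ := ZMod.intCast_surjective (n := q) ((s + t) * i2)
    obtain ⟨B, hB⟩ := ZMod.intCast_surjective (n := q) ((s - t) * i2 * ic)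
    refine ⟨⟨A, B⟩, ?_⟩
    rw [hf]
    have h1 : (A : ZMod q) + (B : ZMod q) * c = s := by
      rw [hA, hB]
      have : (s - t) * i2 * ic * c = (s - t) * i2 := by
        rw [mul_assoc, mul_comm ic c, hic, mul_one]
      rw [this]
      have h2' : (2 : ZMod q) * i2 = 1 := hi2
      linear_combination (s : ZMod q) * h2'
    have h1' : (A : ZMod q) - (B : ZMod q) * c = t := by
      rw [hA, hB]
      have : (s - t) * i2 * ic * c = (s - t) * i2 := by
        rw [mul_assoc, mul_comm ic c, hic, mul_one]
      rw [this]
      linear_combination (t : ZMod q) * hi2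
    rw [h1, h1']
  have hker : RingHom.ker f = Ideal.span ({(q : GaussianInt)} : Set GaussianInt) := by
    apply le_antisymm
    · intro x hx
      rw [RingHom.mem_ker, hf, Prod.mk_eq_zero] at hx
      obtain ⟨hx1, hx2⟩ := hx
      have ha : ((x.re : ℤ) : ZMod q) = 0 := by
        have h2a : (2 : ZMod q) * (x.re : ZMod q) = 0 := by linear_combination hx1 + hx2
        have := congrArg (· * i2) h2a
        simp only [zero_mul] at this
        calc ((x.re : ℤ) : ZMod q) = ((2 : ZMod q) * i2) * (x.re : ZMod q) := by rw [hi2]; ring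
        _ = 0 := by rw [← this]; ring
      have hb : ((x.im : ℤ) : ZMod q) = 0 := by
        have h2b : (2 : ZMod q) * ((x.im : ZMod q) * c) = 0 := by linear_combination hx1 - hx2
        calc ((x.im : ℤ) : ZMod q)
            = ((2 : ZMod q) * i2) * ((x.im : ZMod q) * (c * ic)) := by rw [hi2, hic]; ring
          _ = ((2 : ZMod q) * ((x.im : ZMod q) * c)) * (i2 * ic) := by ring
          _ = 0 := by rw [h2b]; ring
      rw [ZMod.intCast_zmod_eq_zero_iff_dvd] at ha hb
      obtain ⟨a', ha'⟩ := ha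
      obtain ⟨b', hb'⟩ := hb
      rw [Ideal.mem_span_singleton]
      refine ⟨⟨a', b'⟩, ?_⟩
      ext
      · simp [Zsqrtd.re_mul, ha']
      · simp [Zsqrtd.im_mul, hb']
    · rw [Ideal.span_le, Set.singleton_subset_iff]
      show f (q : GaussianInt) = 0
      rw [map_natCast]
      ext <;> simp [ZMod.natCast_self]
  exact ⟨(Ideal.quotEquivOfEq hker.symm).trans (RingHom.quotientKerEquivOfSurjective hsurj)⟩



variable {V : Type*} {G : SimpleGraph V}

def walkTo (f : ℕ → V) :
    (b : ℕ) → (∀ i, i < b → G.Adj (f i) (f (i + 1))) → G.Walk (f 0) (f b)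
  | 0, _ => Walk.nil
  | b + 1, h => (walkTo f b fun i hi => h i (by omega)).concat (h b (by omega))

lemma walkTo_length (f : ℕ → V) (b : ℕ) (h : ∀ i, i < b → G.Adj (f i) (f (i + 1))) :
    (walkTo f b h).length = b := by
  induction b with
  | zero => rfl
  | succ b ih => simp [walkTo, Walk.length_concat, ih]

lemma walkTo_support (f : ℕ → V) (b : ℕ) (h : ∀ i, i < b → G.Adj (f i) (f (i + 1))) :
    (walkTo f b h).support = (List.range (b + 1)).map f := by
  induction b with
  | zero => rw [show List.range 1 = [0] from rfl]; simp [walkTo]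
  | succ b ih =>
    rw [walkTo, Walk.support_concat, ih, List.range_succ (n := b + 1)]
    simp

lemma walkTo_edges (f : ℕ → V) (b : ℕ) (h : ∀ i, i < b → G.Adj (f i) (f (i + 1))) :
    (walkTo f b h).edges = (List.range b).map (fun i => s(f i, f (i + 1))) := by
  induction b with
  | zero => simp [walkTo]
  | succ b ih =>
    rw [walkTo, Walk.edges_concat, ih, List.range_succ]
    simp

lemma hasCycleLength_of_fn (n : ℕ) (hn : 3 ≤ n) (f : ℕ → V)
    (hinj : ∀ i j, i < n → j < n → f i = f j → i = j)
    (hadj : ∀ i, i + 1 < n → G.Adj (f i) (f (i + 1)))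
    (hlast : G.Adj (f (n - 1)) (f 0)) :
    HasCycleLength G n := by
  set b := n - 1 with hb
  have hbn : b + 1 = n := by omega
  have hadj' : ∀ i, i < b → G.Adj (f i) (f (i + 1)) := fun i hi => hadj i (by omega)
  set p : G.Walk (f 0) (f b) := walkTo f b hadj' with hp
  set c : G.Walk (f 0) (f 0) := p.concat hlast with hcdef
  have hlen : c.length = n := by
    rw [hcdef, Walk.length_concat, hp, walkTo_length]; omega
  refine ⟨f 0, c, ?_, hlen⟩
  rw [Walk.isCycle_def, Walk.isTrail_def]
  refine ⟨?_, ?_, ?_⟩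
  · -- edges nodup
    rw [hcdef, Walk.edges_concat, hp, walkTo_edges]
    rw [List.concat_eq_append, List.nodup_append]
    refine ⟨?_, List.nodup_singleton _, ?_⟩
    · refine List.Nodup.map_on ?_ (List.nodup_range (n := b))
      intro i hi j hj hij
      rw [List.mem_range] at hi hj
      rw [Sym2.eq_iff] at hij
      rcases hij with ⟨e1, e2⟩ | ⟨e1, e2⟩
      · exact hinj i j (by omega) (by omega) e1
      · have hx := hinj i (j + 1) (by omega) (by omega) e1
        have hy := hinj (i + 1) j (by omega) (by omega) e2
        omega
    · rintro e he _ he' rfl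
      rw [List.mem_singleton] at he'
      subst he'
      rw [List.mem_map] at he
      obtain ⟨i, hi, heq⟩ := he
      rw [List.mem_range] at hi
      rw [Sym2.eq_iff] at heq
      rcases heq with ⟨e1, e2⟩ | ⟨e1, e2⟩
      · have hx := hinj i b (by omega) (by omega) e1
        have hy := hinj (i + 1) 0 (by omega) (by omega) e2
        omega
      · have hx := hinj i 0 (by omega) (by omega) e1
        have hy := hinj (i + 1) b (by omega) (by omega) e2
        omega
  · -- c ≠ nil
    intro hnil
    have := congrArg Walk.length hnil
    rw [hlen] at this
    simp at this
    omega
  · -- support tail nodup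
    rw [hcdef, Walk.support_concat, hp, walkTo_support]
    have hr : List.range (b + 1) = 0 :: List.map Nat.succ (List.range b) :=
      List.range_succ_eq_map (n := b)
    rw [hr]
    simp only [List.map_cons, List.concat_eq_append, List.cons_append, List.tail_cons, List.map_map]
    rw [List.nodup_append]
    refine ⟨?_, List.nodup_singleton _, ?_⟩
    · refine List.Nodup.map_on ?_ (List.nodup_range (n := b))
      intro i hi j hj hij
      rw [List.mem_range] at hi hj
      have := hinj (i + 1) (j + 1) (by omega) (by omega) hij
      omega
    · rintro x hx _ hx' rfl
      rw [List.mem_singleton] at hx'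
      subst hx'
      rw [List.mem_map] at hx
      obtain ⟨i, hi, heq⟩ := hx
      rw [List.mem_range] at hi
      have := hinj (i + 1) 0 (by omega) (by omega) heq
      omega


variable {V : Type*} {G : SimpleGraph V}

lemma getVert_eq_getD {u v : V} (p : G.Walk u v) :
    ∀ i, i ≤ p.length → p.getVert i = p.support.getD i u := by
  induction p with
  | nil =>
    intro i hi
    have h0 : i = 0 := Nat.le_zero.mp hi
    subst h0
    simp [Walk.getVert]
  | @cons a b c h q ih =>
    intro i hi
    cases i with
    | zero => simp [Walk.getVert]
    | succ i =>
      rw [Walk.getVert_cons_succ, Walk.support_cons, List.getD_cons_succ]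
      rw [Walk.length_cons] at hi
      rw [ih i (by omega)]
      have hi' : i < q.support.length := by rw [Walk.length_support]; omega
      rw [List.getD_eq_getElem _ _ hi', List.getD_eq_getElem _ _ hi']

lemma cycle_getVert_inj {v : V} {c : G.Walk v v} (hc : c.IsCycle) :
    ∀ i j, i < c.length → j < c.length → c.getVert i = c.getVert j → i = j := by
  have hnodup : c.support.tail.Nodup := hc.2
  have hlen3 := hc.three_le_length
  have htlen : c.support.tail.length = c.length := by
    rw [List.length_tail, c.length_support]; omega
  have hinj_t : ∀ a b, a < c.length → b < c.length →
      c.support.tail.getD a v = c.support.tail.getD b v → a = b := by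
    intro a b ha hb h
    rw [List.getD_eq_getElem _ _ (by omega), List.getD_eq_getElem _ _ (by omega)] at h
    exact (List.Nodup.getElem_inj_iff hnodup).mp h
  have hget : ∀ i, 1 ≤ i → i ≤ c.length → c.getVert i = c.support.tail.getD (i - 1) v := by
    intro i h1 h2
    rw [getVert_eq_getD c i h2, c.support_eq_cons]
    cases i with
    | zero => omega
    | succ i => simp
  have hlast : c.support.tail.getD (c.length - 1) v = v := by
    rw [← hget c.length (by omega) (le_refl _), c.getVert_length]
  intro i j hi hj hij
  by_contra hne
  wlog hlt : i < j generalizing i j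
  · exact this j i hj hi hij.symm (Ne.symm hne) (by omega)
  rcases Nat.eq_zero_or_pos i with hi0 | hi0
  · subst hi0
    rw [c.getVert_zero] at hij
    have h1 : c.support.tail.getD (j - 1) v = v := by
      rw [← hget j (by omega) (by omega), ← hij]
    have := hinj_t (j - 1) (c.length - 1) (by omega) (by omega) (by rw [h1, hlast])
    omega
  · rw [hget i (by omega) (by omega), hget j (by omega) (by omega)] at hij
    have := hinj_t (i - 1) (j - 1) (by omega) (by omega) hij
    omega

lemma cycle_length_bound [Fintype V] [DecidableEq V] (A N : Finset V)
    (hAN : ∀ a ∈ A, ∀ w, G.Adj a w → w ∈ N) {v : V} (c : G.Walk v v) (hc : c.IsCycle) :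
    c.length + A.card ≤ Fintype.card V + N.card := by
  classical
  have hn3 : 3 ≤ c.length := hc.three_le_length
  set S := Finset.range c.length with hS
  set SA := S.filter (fun i => c.getVert i ∈ A) with hSA
  set SnotA := S.filter (fun i => ¬ c.getVert i ∈ A) with hSnotA
  set SN := S.filter (fun i => c.getVert i ∈ N) with hSN
  have hsplit : SA.card + SnotA.card = c.length := by
    rw [hSA, hSnotA, Finset.card_filter_add_card_filter_not]
    simp [hS]
  have hinj := cycle_getVert_inj hc
  have h1 : SA.card ≤ SN.card := by
    apply Finset.card_le_card_of_injOn (fun i => (i + 1) % c.length)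
    · intro i hi
      rw [hSA, Finset.mem_coe, Finset.mem_filter, hS, Finset.mem_range] at hi
      obtain ⟨hi, hiA⟩ := hi
      rw [Finset.mem_coe, hSN, Finset.mem_filter, hS, Finset.mem_range]
      refine ⟨Nat.mod_lt _ (by omega), ?_⟩
      have hadj : G.Adj (c.getVert i) (c.getVert ((i + 1) % c.length)) := by
        rcases Nat.lt_or_ge (i + 1) c.length with h | h
        · rw [Nat.mod_eq_of_lt h]
          exact c.adj_getVert_succ (by omega)
        · have hmod : (i + 1) % c.length = 0 := by
            simp [show i + 1 = c.length by omega]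
          have hadj2 : G.Adj (c.getVert i) (c.getVert (i + 1)) :=
            c.adj_getVert_succ (by omega)
          have hv : c.getVert (i + 1) = c.getVert ((i + 1) % c.length) := by
            rw [hmod, c.getVert_zero, show i + 1 = c.length by omega, c.getVert_length]
          rwa [hv] at hadj2
      exact hAN _ hiA _ hadj
    · intro i hi j hj hij
      rw [hSA, Finset.mem_coe, Finset.mem_filter, hS, Finset.mem_range] at hi hj
      dsimp only at hij
      rcases Nat.lt_or_ge (i + 1) c.length with h | h <;>
        rcases Nat.lt_or_ge (j + 1) c.length with h' | h'
      · rw [Nat.mod_eq_of_lt h, Nat.mod_eq_of_lt h'] at hij; omega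
      · rw [Nat.mod_eq_of_lt h,
          show (j + 1) % c.length = 0 by simp [show j + 1 = c.length by omega]] at hij
        omega
      · rw [Nat.mod_eq_of_lt h',
          show (i + 1) % c.length = 0 by simp [show i + 1 = c.length by omega]] at hij
        omega
      · omega
  have h2 : SN.card ≤ N.card := by
    apply Finset.card_le_card_of_injOn (fun i => c.getVert i)
    · intro i hi
      rw [hSN, Finset.mem_coe, Finset.mem_filter] at hi
      exact hi.2
    · intro i hi j hj hij
      rw [hSN, Finset.mem_coe, Finset.mem_filter, hS, Finset.mem_range] at hi hj
      exact hinj i j hi.1 hj.1 hij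
  have h3 : SnotA.card ≤ Aᶜ.card := by
    apply Finset.card_le_card_of_injOn (fun i => c.getVert i)
    · intro i hi
      rw [hSnotA, Finset.mem_coe, Finset.mem_filter] at hi
      simpa using hi.2
    · intro i hi j hj hij
      rw [hSnotA, Finset.mem_coe, Finset.mem_filter, hS, Finset.mem_range] at hi hj
      exact hinj i j hi.1 hj.1 hij
  have h4 : Aᶜ.card + A.card = Fintype.card V := by
    rw [Finset.card_compl]
    have := Finset.card_le_univ A
    omega
  omega






lemma hasCycleLength_of_iso {V W : Type*} {G : SimpleGraph V} {H : SimpleGraph W}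
    (f : G ≃g H) (n : ℕ) (h : HasCycleLength G n) : HasCycleLength H n := by
  obtain ⟨a, p, hp, hl⟩ := h
  refine ⟨f a, p.map f.toHom, ?_, ?_⟩
  · exact (Walk.map_isCycle_iff_of_injective f.toEquiv.injective).mpr hp
  · rw [Walk.length_map, hl]

lemma bipancyclic_iff_of_iso {V W : Type*} {G : SimpleGraph V} {H : SimpleGraph W}
    (f : G ≃g H) : Bipancyclic G ↔ Bipancyclic H := by
  have hcard : Nat.card V = Nat.card W := Nat.card_congr f.toEquiv
  constructor
  · rintro ⟨h4, h⟩
    exact ⟨hcard ▸ h4, fun k hk h4k hkc =>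
      hasCycleLength_of_iso f k (h k hk h4k (hcard ▸ hkc))⟩
  · rintro ⟨h4, h⟩
    exact ⟨hcard ▸ h4, fun k hk h4k hkc =>
      hasCycleLength_of_iso f.symm k (h k hk h4k (hcard ▸ hkc))⟩

def zdGraphIso {R S : Type*} [CommRing R] [CommRing S] (e : R ≃+* S) :
    zdGraph R ≃g zdGraph S where
  toEquiv := {
    toFun := fun x => ⟨e x, by
      obtain ⟨hx0, y, hy0, hxy⟩ := x.2
      refine ⟨fun h => hx0 (by simpa using e.injective (h.trans (map_zero e).symm)), e y,
        fun h => hy0 (e.injective (h.trans (map_zero e).symm)), ?_⟩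
      rw [← map_mul, hxy, map_zero]⟩
    invFun := fun x => ⟨e.symm x, by
      obtain ⟨hx0, y, hy0, hxy⟩ := x.2
      refine ⟨fun h => hx0 (by simpa using e.symm.injective (h.trans (map_zero e.symm).symm)),
        e.symm y, fun h => hy0 (e.symm.injective (h.trans (map_zero e.symm).symm)), ?_⟩
      rw [← map_mul, hxy, map_zero]⟩
    left_inv := fun x => by ext; simp
    right_inv := fun x => by ext; simp }
  map_rel_iff' := by
    intro x y
    show (_ ≠ _ ∧ e x * e y = 0) ↔ (x ≠ y ∧ (x : R) * y = 0)
    constructor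
    · rintro ⟨h1, h2⟩
      refine ⟨fun h => h1 (by rw [h]), ?_⟩
      have : e ((x : R) * y) = 0 := by rw [map_mul]; exact h2
      exact e.injective (this.trans (map_zero e).symm)
    · rintro ⟨h1, h2⟩
      refine ⟨fun h => h1 (Subtype.ext (e.injective (Subtype.ext_iff.mp h))), ?_⟩
      rw [← map_mul, h2, map_zero]

lemma zd_not_isUnit {R : Type*} [CommRing R] {x : R} (hx : x ∈ zdVertex R) : ¬ IsUnit x := by
  rintro ⟨u, rfl⟩
  obtain ⟨hx0, y, hy0, hxy⟩ := hx
  exact hy0 ((Units.mul_right_eq_zero u).mp hxy)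

lemma nonunit_ann (p m : ℕ) (hp : p.Prime) (hm : 1 ≤ m) {y : ZMod (p ^ m)} (hy : ¬ IsUnit y) :
    ∃ z : ZMod (p ^ m), z ≠ 0 ∧ y * z = 0 := by
  haveI : NeZero (p ^ m) := ⟨pow_ne_zero _ hp.pos.ne'⟩
  have hyv : ((y.val : ℕ) : ZMod (p ^ m)) = y := by rw [ZMod.natCast_val, ZMod.cast_id]
  have hco : ¬ Nat.Coprime y.val (p ^ m) := fun h =>
    hy (hyv ▸ (ZMod.isUnit_iff_coprime _ _).mpr h)
  have hpd : p ∣ y.val := by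
    by_contra hnd
    exact hco (Nat.Coprime.pow_right m (((hp.coprime_iff_not_dvd).mpr hnd).symm))
  obtain ⟨t, ht⟩ := hpd
  have hpm : p * p ^ (m - 1) = p ^ m := by
    rw [← pow_succ']
    congr 1
    omega
  refine ⟨((p ^ (m - 1) : ℕ) : ZMod (p ^ m)), ?_, ?_⟩
  · rw [Ne, ZMod.natCast_eq_zero_iff]
    intro hdvd
    have h1 := Nat.le_of_dvd (Nat.pow_pos hp.pos) hdvd
    have h2 : p ^ (m - 1) < p ^ m := Nat.pow_lt_pow_right hp.one_lt (by omega)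
    omega
  · rw [← hyv, ← Nat.cast_mul, ht, ZMod.natCast_eq_zero_iff]
    exact ⟨t, by rw [← hpm]; ring⟩

lemma notBipancyclic (p m : ℕ) (hp : p.Prime) (hp5 : 5 ≤ p) (hm : 2 ≤ m) :
    ¬ Bipancyclic (zdGraph (ZMod (p ^ m) × ZMod (p ^ m))) := by
  haveI : Fact p.Prime := ⟨hp⟩
  have hq1 : 1 < p ^ m := by
    calc 1 < p := by omega
    _ ≤ p ^ m := Nat.le_self_pow (by omega) p
  haveI : NeZero (p ^ m) := ⟨by omega⟩
  haveI : Fact (1 < p ^ m) := ⟨hq1⟩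
  haveI : Fintype ↥(zdVertex (ZMod (p ^ m) × ZMod (p ^ m))) :=
    Set.Finite.fintype (Set.toFinite _)
  classical
  rintro ⟨h4, hcyc⟩
  set R := ZMod (p ^ m) × ZMod (p ^ m) with hR
  set A : Finset ↥(zdVertex R) := Finset.univ.filter (fun x => IsUnit (x : R).1) with hA
  set N : Finset ↥(zdVertex R) := Finset.univ.filter (fun x => (x : R).1 = 0) with hN
  have hAN : ∀ a ∈ A, ∀ w, (zdGraph R).Adj a w → w ∈ N := by
    intro a ha w hadj
    rw [hA, Finset.mem_filter] at ha
    rw [hN, Finset.mem_filter]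
    obtain ⟨hne, hmul⟩ := hadj
    have h1 : (a : R).1 * (w : R).1 = 0 := by
      have := congrArg Prod.fst hmul
      exact this
    exact ⟨Finset.mem_univ _, (ha.2.mul_right_eq_zero).mp h1⟩
  -- cardinality of A
  have hAeq : A.card = Fintype.card {x : ↥(zdVertex R) // IsUnit (x : R).1} :=
    (Fintype.card_subtype _).symm
  have hAequiv : {x : ↥(zdVertex R) // IsUnit (x : R).1} ≃
      {u : ZMod (p ^ m) // IsUnit u} × {y : ZMod (p ^ m) // ¬ IsUnit y} := by
    refine Equiv.ofBijective (fun x => (⟨(x.1 : R).1, x.2⟩, ⟨(x.1 : R).2, ?_⟩)) ⟨?_, ?_⟩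
    · intro hy2
      exact zd_not_isUnit x.1.2 (by
        have : IsUnit ((x.1 : R)) := by
          rcases x.2.exists_right_inv with ⟨i1, hi1⟩
          rcases hy2.exists_right_inv with ⟨i2, hi2⟩
          exact IsUnit.of_mul_eq_one ((i1, i2) : R) (by
            ext
            · exact hi1
            · exact hi2)
        exact this)
    · intro x y hxy
      simp only [Prod.mk.injEq, Subtype.mk.injEq] at hxy
      exact Subtype.ext (Subtype.ext (Prod.ext hxy.1 hxy.2))
    · rintro ⟨⟨u, hu⟩, ⟨y, hy⟩⟩
      obtain ⟨z, hz0, hyz⟩ := nonunit_ann p m hp (by omega) hy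
      refine ⟨⟨⟨((u, y) : R), ?_, (((0 : ZMod (p ^ m)), z) : R), ?_, ?_⟩, hu⟩, rfl⟩
      · intro h
        rw [Prod.ext_iff] at h
        exact hu.ne_zero h.1
      · intro h
        rw [Prod.ext_iff] at h
        exact hz0 h.2
      · ext
        · exact mul_zero u
        · exact hyz
  -- cardinality of N
  have hNeq : N.card = Fintype.card {x : ↥(zdVertex R) // (x : R).1 = 0} :=
    (Fintype.card_subtype _).symm
  have hNequiv : {x : ↥(zdVertex R) // (x : R).1 = 0} ≃ {b : ZMod (p ^ m) // b ≠ 0} := by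
    refine Equiv.ofBijective (fun x => ⟨(x.1 : R).2, ?_⟩) ⟨?_, ?_⟩
    · intro h2
      exact x.1.2.1 (Prod.ext x.2 h2)
    · intro x y hxy
      simp only [Subtype.mk.injEq] at hxy
      exact Subtype.ext (Subtype.ext (Prod.ext (x.2.trans y.2.symm) hxy))
    · rintro ⟨b, hb⟩
      refine ⟨⟨⟨((0 : ZMod (p ^ m)), b), ?_, ((1 : ZMod (p ^ m)), (0 : ZMod (p ^ m))), ?_, ?_⟩, rfl⟩, rfl⟩
      · intro h
        rw [Prod.ext_iff] at h
        exact hb h.2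
      · intro h
        rw [Prod.ext_iff] at h
        exact one_ne_zero h.1
      · ext
        · exact zero_mul 1
        · exact mul_zero b
  -- units subtype card
  have hUcard : Fintype.card {u : ZMod (p ^ m) // IsUnit u} = Nat.totient (p ^ m) := by
    have e : (ZMod (p ^ m))ˣ ≃ {u : ZMod (p ^ m) // IsUnit u} :=
      { toFun := fun u => ⟨u, u.isUnit⟩
        invFun := fun x => x.2.unit
        left_inv := fun u => Units.ext u.isUnit.unit_spec
        right_inv := fun x => Subtype.ext x.2.unit_spec }
    rw [← Fintype.card_congr e, ZMod.card_units_eq_totient]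
  have hNUcard : Fintype.card {y : ZMod (p ^ m) // ¬ IsUnit y} = p ^ m - Nat.totient (p ^ m) := by
    rw [Fintype.card_subtype_compl, hUcard, ZMod.card]
  have hbcard : Fintype.card {b : ZMod (p ^ m) // b ≠ 0} = p ^ m - 1 := by
    have : Fintype.card {b : ZMod (p ^ m) // ¬ (b = 0)} =
        Fintype.card (ZMod (p ^ m)) - Fintype.card {b : ZMod (p ^ m) // b = 0} :=
      Fintype.card_subtype_compl _
    rw [this, ZMod.card, Fintype.card_subtype_eq]
  have htot : Nat.totient (p ^ m) = p ^ (m - 1) * (p - 1) := Nat.totient_prime_pow hp (by omega)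
  have hqs : p ^ m = p ^ (m - 1) * p := by
    rw [← pow_succ]
    congr 1
    omega
  have hsub : p ^ (m - 1) * (p - 1) + p ^ (m - 1) = p ^ (m - 1) * p := by
    have hp1 : p - 1 + 1 = p := by omega
    calc p ^ (m - 1) * (p - 1) + p ^ (m - 1) = p ^ (m - 1) * ((p - 1) + 1) := by ring
    _ = p ^ (m - 1) * p := by rw [hp1]
  have hAcard : A.card = p ^ (m - 1) * (p - 1) * p ^ (m - 1) := by
    rw [hAeq, Fintype.card_congr hAequiv, Fintype.card_prod, hUcard, hNUcard, htot, hqs]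
    congr 1
    omega
  have hNcard : N.card = p ^ m - 1 := by
    rw [hNeq, Fintype.card_congr hNequiv, hbcard]
  -- get a long cycle
  set n := Nat.card ↥(zdVertex R) with hn
  obtain ⟨a, cw, hcw, hclen⟩ := hcyc (2 * (n / 2)) ⟨n / 2, by omega⟩ (by omega) (by omega)
  have hbound := cycle_length_bound A N hAN cw hcw
  rw [hclen] at hbound
  rw [← Nat.card_eq_fintype_card, ← hn] at hbound
  -- contradiction
  have hs5 : 5 ≤ p ^ (m - 1) := by
    calc 5 ≤ p := hp5
    _ ≤ p ^ (m - 1) := Nat.le_self_pow (by omega) p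
  have hbig : N.card + 2 ≤ A.card := by
    rw [hAcard, hNcard, hqs]
    set s := p ^ (m - 1) with hsdef
    have hps : p ≤ s := Nat.le_self_pow (by omega) p
    have h4p : 4 ≤ p - 1 := by omega
    have h1' : s * p ≤ s * s := Nat.mul_le_mul_left s hps
    have h3 : 25 ≤ s * p := Nat.mul_le_mul hs5 hp5
    have h0 : s * p - 1 + 2 = s * p + 1 := by omega
    have h5 : s * p * 4 ≤ s * s * (p - 1) :=
      le_trans (Nat.mul_le_mul_right 4 h1') (Nat.mul_le_mul_left (s * s) h4p)
    have h6 : s * (p - 1) * s = s * s * (p - 1) := by ring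
    rw [h0, h6]
    omega
  omega

lemma mem_zd_left {p : ℕ} [Fact (1 < p)] {a : ZMod p} (ha : a ≠ 0) :
    ((a, 0) : ZMod p × ZMod p) ∈ zdVertex (ZMod p × ZMod p) := by
  refine ⟨?_, ((0 : ZMod p), (1 : ZMod p)), ?_, ?_⟩
  · intro h
    rw [Prod.ext_iff] at h
    exact ha h.1
  · intro h
    rw [Prod.ext_iff] at h
    exact one_ne_zero h.2
  · ext
    · exact mul_zero a
    · exact zero_mul 1

lemma mem_zd_right {p : ℕ} [Fact (1 < p)] {a : ZMod p} (ha : a ≠ 0) :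
    (((0 : ZMod p), a) : ZMod p × ZMod p) ∈ zdVertex (ZMod p × ZMod p) := by
  refine ⟨?_, ((1 : ZMod p), (0 : ZMod p)), ?_, ?_⟩
  · intro h
    rw [Prod.ext_iff] at h
    exact ha h.2
  · intro h
    rw [Prod.ext_iff] at h
    exact one_ne_zero h.1
  · ext
    · exact zero_mul 1
    · exact mul_zero a

lemma zdVertexField (p : ℕ) (hp : p.Prime) {x : ZMod p × ZMod p}
    (hx : x ∈ zdVertex (ZMod p × ZMod p)) :
    (x.1 ≠ 0 ∧ x.2 = 0) ∨ (x.1 = 0 ∧ x.2 ≠ 0) := by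
  haveI : Fact p.Prime := ⟨hp⟩
  obtain ⟨hx0, y, hy0, hxy⟩ := hx
  have h1 : x.1 * y.1 = 0 := by have := congrArg Prod.fst hxy; simpa using this
  have h2 : x.2 * y.2 = 0 := by have := congrArg Prod.snd hxy; simpa using this
  by_cases hx1 : x.1 = 0
  · right
    exact ⟨hx1, fun h2' => hx0 (Prod.ext hx1 h2')⟩
  · left
    refine ⟨hx1, ?_⟩
    have hy1 : y.1 = 0 := by
      rcases mul_eq_zero.mp h1 with h | h
      · exact absurd h hx1
      · exact h
    have hy2 : y.2 ≠ 0 := fun h => hy0 (Prod.ext hy1 h)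
    rcases mul_eq_zero.mp h2 with h | h
    · exact h
    · exact absurd h hy2

lemma bipancyclicField (p : ℕ) (hp : p.Prime) (hp5 : 5 ≤ p) :
    Bipancyclic (zdGraph (ZMod p × ZMod p)) := by
  haveI : Fact p.Prime := ⟨hp⟩
  haveI : Fact (1 < p) := ⟨by omega⟩
  haveI : NeZero p := ⟨by omega⟩
  haveI : Fintype ↥(zdVertex (ZMod p × ZMod p)) := Set.Finite.fintype (Set.toFinite _)
  classical
  -- cardinality
  have hE : Nat.card ↥(zdVertex (ZMod p × ZMod p)) = 2 * (p - 1) := by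
    have E : ({a : ZMod p // a ≠ 0} ⊕ {a : ZMod p // a ≠ 0}) ≃
        ↥(zdVertex (ZMod p × ZMod p)) := by
      refine Equiv.ofBijective (fun x => Sum.rec
        (fun a => ⟨((a.1, 0) : ZMod p × ZMod p), mem_zd_left a.2⟩)
        (fun b => ⟨(((0 : ZMod p), b.1) : ZMod p × ZMod p), mem_zd_right b.2⟩) x) ⟨?_, ?_⟩
      · rintro (a | a) (b | b) hab <;>
          simp only [Subtype.mk.injEq, Prod.mk.injEq] at hab
        · exact congrArg Sum.inl (Subtype.ext hab.1)
        · exact absurd hab.1 a.2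
        · exact absurd hab.1.symm b.2
        · exact congrArg Sum.inr (Subtype.ext hab.2)
      · rintro ⟨x, hx⟩
        rcases zdVertexField p hp hx with ⟨h1, h2⟩ | ⟨h1, h2⟩
        · exact ⟨Sum.inl ⟨x.1, h1⟩, Subtype.ext (Prod.ext rfl h2.symm)⟩
        · exact ⟨Sum.inr ⟨x.2, h2⟩, Subtype.ext (Prod.ext h1.symm rfl)⟩
    rw [← Nat.card_congr E, Nat.card_sum]
    have hsub : Nat.card {a : ZMod p // a ≠ 0} = p - 1 := by
      rw [Nat.card_eq_fintype_card]
      have : Fintype.card {a : ZMod p // ¬ (a = 0)} =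
          Fintype.card (ZMod p) - Fintype.card {a : ZMod p // a = 0} :=
        Fintype.card_subtype_compl _
      rw [this, ZMod.card, Fintype.card_subtype_eq]
    rw [hsub]
    omega
  refine ⟨by rw [hE]; omega, ?_⟩
  intro k hk h4k hkn
  rw [hE] at hkn
  -- the alternating cycle
  set g : ℕ → ZMod p := fun j => ((j % (p - 1) + 1 : ℕ) : ZMod p) with hg
  have hg0 : ∀ j, g j ≠ 0 := by
    intro j h
    rw [hg] at h
    rw [ZMod.natCast_eq_zero_iff] at h
    have h1 := Nat.le_of_dvd (by omega) h
    have h2 : j % (p - 1) < p - 1 := Nat.mod_lt _ (by omega)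
    omega
  have hginj : ∀ i j, i < p - 1 → j < p - 1 → g i = g j → i = j := by
    intro i j hi hj h
    rw [hg] at h
    have hv := congrArg ZMod.val h
    rw [ZMod.val_cast_of_lt (by have := Nat.mod_lt i (show 0 < p - 1 by omega); omega),
      ZMod.val_cast_of_lt (by have := Nat.mod_lt j (show 0 < p - 1 by omega); omega)] at hv
    rw [Nat.mod_eq_of_lt hi, Nat.mod_eq_of_lt hj] at hv
    omega
  set f : ℕ → ↥(zdVertex (ZMod p × ZMod p)) := fun i =>
    if Even i then ⟨((g (i / 2), 0) : ZMod p × ZMod p), mem_zd_left (hg0 _)⟩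
    else ⟨(((0 : ZMod p), g (i / 2)) : ZMod p × ZMod p), mem_zd_right (hg0 _)⟩ with hf
  have hfeven : ∀ i, Even i → ((f i : ZMod p × ZMod p)) = (g (i / 2), 0) := by
    intro i h; rw [hf]; simp [h]
  have hfodd : ∀ i, ¬ Even i → ((f i : ZMod p × ZMod p)) = (0, g (i / 2)) := by
    intro i h; rw [hf]; simp [h]
  have hk2 : k % 2 = 0 := Nat.even_iff.mp hk
  apply hasCycleLength_of_fn k (by omega) f
  · -- injectivity
    intro i j hi hj hij
    have hij' := congrArg (Subtype.val) hij
    by_cases hie : Even i <;> by_cases hje : Even j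
    · rw [hfeven i hie, hfeven j hje] at hij'
      rw [Prod.mk.injEq] at hij'
      have := hginj (i / 2) (j / 2) (by omega) (by omega) hij'.1
      rw [Nat.even_iff] at hie hje
      omega
    · rw [hfeven i hie, hfodd j hje] at hij'
      rw [Prod.mk.injEq] at hij'
      exact absurd hij'.1 (hg0 _)
    · rw [hfodd i hie, hfeven j hje] at hij'
      rw [Prod.mk.injEq] at hij'
      exact absurd hij'.1.symm (hg0 _)
    · rw [hfodd i hie, hfodd j hje] at hij'
      rw [Prod.mk.injEq] at hij'
      have := hginj (i / 2) (j / 2) (by omega) (by omega) hij'.2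
      rw [Nat.even_iff] at hie hje
      omega
  · -- adjacency
    intro i hi
    by_cases hie : Even i
    · have hje : ¬ Even (i + 1) := by rw [Nat.even_iff] at hie ⊢; omega
      refine ⟨?_, ?_⟩
      · intro h
        have := congrArg Subtype.val h
        rw [hfeven i hie, hfodd (i + 1) hje, Prod.mk.injEq] at this
        exact hg0 _ this.1
      · rw [hfeven i hie, hfodd (i + 1) hje]
        ext
        · exact mul_zero _
        · exact zero_mul _
    · have hje : Even (i + 1) := by rw [Nat.even_iff] at hie ⊢; omega
      refine ⟨?_, ?_⟩
      · intro h
        have := congrArg Subtype.val h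
        rw [hfodd i hie, hfeven (i + 1) hje, Prod.mk.injEq] at this
        exact hg0 _ this.1.symm
      · rw [hfodd i hie, hfeven (i + 1) hje]
        ext
        · exact zero_mul _
        · exact mul_zero _
  · -- closing edge
    have h1e : ¬ Even (k - 1) := by rw [Nat.even_iff]; omega
    have h0e : Even 0 := Even.zero
    refine ⟨?_, ?_⟩
    · intro h
      have := congrArg Subtype.val h
      rw [hfodd (k - 1) h1e, hfeven 0 h0e, Prod.mk.injEq] at this
      exact hg0 _ this.1.symm
    · rw [hfodd (k - 1) h1e, hfeven 0 h0e]
      ext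
      · exact zero_mul _
      · exact mul_zero _

theorem stmt6 (p m : ℕ) (hp : p.Prime) (h1 : p % 4 = 1) (hm : 1 ≤ m) :
    Bipancyclic (zdGraph (Zi (p ^ m))) ↔ m = 1 := by
  haveI : Fact p.Prime := ⟨hp⟩
  have h2le := hp.two_le
  have hp5 : 5 ≤ p := by omega
  haveI : NeZero (p ^ m) := ⟨pow_ne_zero _ (by omega)⟩
  obtain ⟨C, hC⟩ := hensel_sq_neg_one p hp h1 m
  have hc : ((C : ℤ) : ZMod (p ^ m)) * ((C : ℤ) : ZMod (p ^ m)) = -1 := by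
    have h0 : ((C ^ 2 + 1 : ℤ) : ZMod (p ^ m)) = 0 := by
      rw [ZMod.intCast_zmod_eq_zero_iff_dvd]
      push_cast
      exact hC
    push_cast at h0
    linear_combination h0
  have hcu : IsUnit ((C : ℤ) : ZMod (p ^ m)) :=
    IsUnit.of_mul_eq_one (-((C : ℤ) : ZMod (p ^ m))) (by linear_combination -hc)
  have h2u : IsUnit (2 : ZMod (p ^ m)) := by
    have h2c : ((2 : ℕ) : ZMod (p ^ m)) = (2 : ZMod (p ^ m)) := by norm_cast
    rw [← h2c, ZMod.isUnit_iff_coprime]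
    refine Nat.Coprime.pow_right _ ?_
    rw [Nat.Prime.coprime_iff_not_dvd Nat.prime_two]
    omega
  obtain ⟨e⟩ := ziEquiv_s6 (p ^ m) _ hc h2u hcu
  rw [bipancyclic_iff_of_iso (zdGraphIso e)]
  constructor
  · intro hb
    by_contra hm1
    exact notBipancyclic p m hp hp5 (by omega) hb
  · intro hm1
    subst hm1
    rw [pow_one]
    exact bipancyclicField p hp hp5
end

section
/- If n = p₁p₂⋯p_k is a product of at least two distinct primes p₁ < p₂ < ⋯ < p_k, then the zero-divisor graph Γ(ℤ_n) is not Hamiltonian. -/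
open SimpleGraph

section Aux
open Finset


/-- In a finite commutative ring, every non-unit is a zero divisor (incl. 0). -/
lemma exists_mul_eq_zero' {R : Type*} [CommRing R] [Finite R] {x : R} (hx : ¬ IsUnit x) :
    ∃ y, y ≠ 0 ∧ x * y = 0 := by
  by_contra h
  push_neg at h
  have hinj : Function.Injective (fun y : R => x * y) := by
    intro a b hab
    by_contra hne
    have h1 : x * (a - b) = 0 := by
      simp only [] at hab
      rw [mul_sub, hab, sub_self]
    exact h (a - b) (sub_ne_zero.mpr hne) h1
  obtain ⟨y, hy⟩ := Finite.surjective_of_injective hinj 1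
  exact hx (IsUnit.of_mul_eq_one y hy)

/-- A Hamiltonian graph admits an injective "successor" map sending each vertex
to a neighbor. -/
lemma ham_succ {V : Type*} [Fintype V] {G : SimpleGraph V}
    (h : ∃ (a : V) (p : G.Walk a a), p.IsCycle ∧ ∀ v, v ∈ p.support) :
    ∃ σ : V → V, Function.Injective σ ∧ ∀ v, G.Adj v (σ v) := by
  classical
  obtain ⟨a, p, hc, hall⟩ := h
  have hm3 : 3 ≤ p.length := hc.three_le_length
  haveI : NeZero p.length := ⟨by omega⟩
  have htail_len : p.support.tail.length = p.length := by
    rw [List.length_tail, p.length_support]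
    omega
  set f : ZMod p.length → V := fun i => p.getVert i.val with hf
  have hadjf : ∀ i : ZMod p.length, G.Adj (f i) (f (i + 1)) := by
    intro i
    have hlt : i.val < p.length := ZMod.val_lt i
    have hv1 : (1 : ZMod p.length).val = 1 := by haveI : Fact (1 < p.length) := ⟨by omega⟩; exact ZMod.val_one p.length
    have hadd : (i + 1).val = (i.val + 1) % p.length := by
      rw [ZMod.val_add, hv1]
    by_cases hj : i.val + 1 < p.length
    · have : (i + 1).val = i.val + 1 := by rw [hadd, Nat.mod_eq_of_lt hj]
      rw [hf]
      simp only [this]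
      exact p.adj_getVert_succ hlt
    · have hie : i.val = p.length - 1 := by omega
      have : (i + 1).val = 0 := by
        rw [hadd, hie]
        have : p.length - 1 + 1 = p.length := by omega
        rw [this, Nat.mod_self]
      rw [hf]
      simp only [this, p.getVert_zero]
      have := p.adj_getVert_succ (i := p.length - 1) (by omega)
      rw [hie]
      have hl : p.length - 1 + 1 = p.length := by omega
      rw [hl, p.getVert_length] at this
      exact this
  have hsurj : Function.Surjective f := by
    intro v
    obtain ⟨i, hiv, hile⟩ := SimpleGraph.Walk.mem_support_iff_exists_getVert.mp (hall v)
    by_cases hi : i < p.length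
    · exact ⟨(i : ZMod p.length), by rw [hf]; simp only [ZMod.val_natCast_of_lt hi]; exact hiv⟩
    · have : i = p.length := by omega
      refine ⟨0, ?_⟩
      rw [hf]
      simp only [ZMod.val_zero, p.getVert_zero]
      rw [this, p.getVert_length] at hiv
      exact hiv
  have hcard : Fintype.card V = p.length := by
    have hle1 : Fintype.card V ≤ p.length := by
      have := Fintype.card_le_of_surjective f hsurj
      rwa [ZMod.card] at this
    have hle2 : p.length ≤ Fintype.card V := by
      have hnd : p.support.tail.Nodup := hc.support_nodup
      have h2 := List.toFinset_card_of_nodup hnd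
      have h3 := Finset.card_le_univ p.support.tail.toFinset
      rw [h2, htail_len] at h3
      exact h3
    omega
  have hbij : Function.Bijective f := by
    rw [Fintype.bijective_iff_surjective_and_card]
    exact ⟨hsurj, by rw [ZMod.card, hcard]⟩
  let e := Equiv.ofBijective f hbij
  refine ⟨fun v => f (e.symm v + 1), ?_, ?_⟩
  · intro x y hxy
    have h1 := hbij.1 hxy
    have h2 : e.symm x = e.symm y := by
      have := add_right_cancel h1
      exact this
    exact e.symm.injective h2
  · intro v
    have hv : f (e.symm v) = v := e.apply_symm_apply v
    have := hadjf (e.symm v)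
    rwa [hv] at this

lemma card_val_filter {n : ℕ} [NeZero n] (P : ℕ → Prop) [DecidablePred P] :
    ((Finset.univ : Finset (ZMod n)).filter (fun x => P x.val)).card
      = ((Finset.range n).filter P).card := by
  apply Finset.card_bij (fun x _ => x.val)
  · intro a ha
    simp only [Finset.mem_filter, Finset.mem_univ, true_and] at ha
    simp only [Finset.mem_filter, Finset.mem_range]
    exact ⟨ZMod.val_lt a, ha⟩
  · intro a _ b _ hab
    exact ZMod.val_injective n hab
  · intro b hb
    simp only [Finset.mem_filter, Finset.mem_range] at hb
    refine ⟨(b : ZMod n), ?_, ZMod.val_cast_of_lt hb.1⟩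
    simp only [Finset.mem_filter, Finset.mem_univ, true_and, ZMod.val_cast_of_lt hb.1]
    exact hb.2


end Aux

theorem stmt9 (n : ℕ) (s : Finset ℕ) (hp : ∀ p ∈ s, p.Prime) (hcard : 2 ≤ s.card)
    (hn : n = ∏ p ∈ s, p) :
    ¬ IsHamiltonianGraph (zdGraph (ZMod n)) := by
  classical
  intro hham
  -- set up the primes
  have hs_ne : s.Nonempty := Finset.card_pos.mp (by omega)
  set q := s.max' hs_ne with hqdef
  have hq_mem : q ∈ s := s.max'_mem hs_ne
  have hqprime : q.Prime := hp q hq_mem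
  set s' := s.erase q with hs'def
  have hs'_ne : s'.Nonempty := by
    rw [← Finset.card_pos, hs'def, Finset.card_erase_of_mem hq_mem]; omega
  obtain ⟨p₀, hp₀s'⟩ := hs'_ne
  have hp₀mem : p₀ ∈ s := Finset.mem_of_mem_erase hp₀s'
  have hp₀prime : p₀.Prime := hp p₀ hp₀mem
  have hp₀q : p₀ < q :=
    lt_of_le_of_ne (s.le_max' _ hp₀mem) (Finset.ne_of_mem_erase hp₀s')
  set s'' := s'.erase p₀ with hs''def
  set m' := ∏ p ∈ s'', p with hm'def
  set t := ∏ p ∈ s', p with htdef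
  have hp₀2 : 2 ≤ p₀ := hp₀prime.two_le
  have hq3 : 3 ≤ q := by omega
  have hts : t = p₀ * m' := by
    rw [htdef, hm'def, hs''def]
    exact (Finset.mul_prod_erase s' (fun p => p) hp₀s').symm
  have hnt : n = q * t := by
    rw [hn, htdef, hs'def]
    exact (Finset.mul_prod_erase s (fun p => p) hq_mem).symm
  have hm'pos : 0 < m' := by
    rw [hm'def]
    exact Finset.prod_pos (fun p hp' => (hp p (Finset.mem_of_mem_erase (Finset.mem_of_mem_erase hp'))).pos)
  have ht2 : 2 ≤ t := by
    rw [hts]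
    calc 2 ≤ p₀ := hp₀prime.two_le
    _ = p₀ * 1 := by ring
    _ ≤ p₀ * m' := by exact Nat.mul_le_mul_left _ hm'pos
  have hq2 : 2 ≤ q := hqprime.two_le
  have hn6 : 6 ≤ n := by
    rw [hnt]
    calc 6 = 3 * 2 := rfl
    _ ≤ q * t := Nat.mul_le_mul hq3 ht2
  haveI : NeZero n := ⟨by omega⟩
  -- coprimality and totient computation
  have hqt : Nat.Coprime q t := by
    rw [hqprime.coprime_iff_not_dvd]
    intro hdvd
    rw [htdef] at hdvd
    obtain ⟨r, hr, hqr⟩ := (hqprime.prime.dvd_finset_prod_iff _).mp hdvd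
    have hrprime : r.Prime := hp r (Finset.mem_of_mem_erase hr)
    have : q = r := (Nat.prime_dvd_prime_iff_eq hqprime hrprime).mp hqr
    exact Finset.ne_of_mem_erase hr this.symm
  have hp₀m' : Nat.Coprime p₀ m' := by
    rw [hp₀prime.coprime_iff_not_dvd]
    intro hdvd
    rw [hm'def] at hdvd
    obtain ⟨r, hr, hqr⟩ := (hp₀prime.prime.dvd_finset_prod_iff _).mp hdvd
    have hrprime : r.Prime := hp r (Finset.mem_of_mem_erase (Finset.mem_of_mem_erase hr))
    have : p₀ = r := (Nat.prime_dvd_prime_iff_eq hp₀prime hrprime).mp hqr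
    exact Finset.ne_of_mem_erase hr this.symm
  have hφn : n.totient = (q - 1) * ((p₀ - 1) * m'.totient) := by
    rw [hnt, Nat.totient_mul hqt, hts, Nat.totient_mul hp₀m',
      Nat.totient_prime hqprime, Nat.totient_prime hp₀prime]
  have hkey : n.totient + 2 * t ≤ n := by
    rw [hφn, hnt, hts]
    have hφm' : m'.totient ≤ m' := Nat.totient_le m'
    obtain ⟨a, ha⟩ : ∃ a, q = a + 3 := ⟨q - 3, by omega⟩
    obtain ⟨b, hb⟩ : ∃ b, p₀ = b + 2 := ⟨p₀ - 2, by omega⟩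
    have hba : b + 3 ≤ a + 3 := by omega
    rw [ha, hb]
    have h1 : a + 3 - 1 = a + 2 := by omega
    have h2 : b + 2 - 1 = b + 1 := by omega
    rw [h1, h2]
    nlinarith [Nat.mul_le_mul_left ((a + 2) * (b + 1)) hφm']
  -- the two finsets
  set A : Finset (ZMod n) :=
    Finset.univ.filter (fun x : ZMod n => x.val ≠ 0 ∧ q ∣ x.val) with hAdef
  set C : Finset (ZMod n) :=
    Finset.univ.filter (fun x : ZMod n => x.val ≠ 0 ∧ ¬ Nat.Coprime n x.val) with hCdef
  -- cardinality of A
  have hAcard : A.card = t - 1 := by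
    rw [hAdef, card_val_filter (fun k => k ≠ 0 ∧ q ∣ k)]
    have hrange : n = (n - 1) + 1 := by omega
    rw [hrange]
    rw [← Nat.succ_eq_add_one, Nat.card_multiples' (n - 1) q]
    -- (n - 1) / q = t - 1
    have h1 : n - 1 = (q - 1) + (t - 1) * q := by
      obtain ⟨q1, hq1⟩ : ∃ a, q = a + 1 := ⟨q - 1, by omega⟩
      obtain ⟨t1, ht1⟩ : ∃ a, t = a + 1 := ⟨t - 1, by omega⟩
      rw [hnt, hq1, ht1]
      have e1 : (q1 + 1) * (t1 + 1) = q1 * t1 + q1 + t1 + 1 := by ring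
      have e2 : (t1 + 1 - 1) * (q1 + 1) = q1 * t1 + t1 := by
        simp only [Nat.add_sub_cancel]
        ring
      omega
    rw [h1, Nat.add_mul_div_right _ _ (by omega : 0 < q), Nat.div_eq_of_lt (by omega)]
    omega
  -- cardinality of C
  have hCcard : C.card = n - (1 + n.totient) := by
    rw [hCdef, card_val_filter (fun k => k ≠ 0 ∧ ¬ Nat.Coprime n k)]
    have hsplit := Finset.card_filter_add_card_filter_not
      (s := Finset.range n) (p := fun k => k ≠ 0 ∧ ¬ Nat.Coprime n k)
    have hneg : (Finset.range n).filter (fun k => ¬(k ≠ 0 ∧ ¬ Nat.Coprime n k))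
        = insert 0 ((Finset.range n).filter (fun k => Nat.Coprime n k)) := by
      ext k
      simp only [Finset.mem_filter, Finset.mem_insert, Finset.mem_range, not_and, not_not, ne_eq,
        not_imp_not]
      constructor
      · rintro ⟨hk, h⟩
        by_cases hk0 : k = 0
        · exact Or.inl hk0
        · exact Or.inr ⟨hk, h hk0⟩
      · rintro (rfl | ⟨hk, h⟩)
        · exact ⟨by omega, fun h0 => absurd rfl h0⟩
        · exact ⟨hk, fun _ => h⟩
    have hnotmem : 0 ∉ (Finset.range n).filter (fun k => Nat.Coprime n k) := by
      simp only [Finset.mem_filter, Finset.mem_range]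
      rintro ⟨-, hcop⟩
      rw [Nat.coprime_zero_right] at hcop
      omega
    have htot : ((Finset.range n).filter (fun k => Nat.Coprime n k)).card = n.totient := rfl
    rw [hneg, Finset.card_insert_of_notMem hnotmem, htot, Finset.card_range] at hsplit
    omega
  -- A ⊆ C
  have hAC : A ⊆ C := by
    intro x hx
    rw [hAdef, Finset.mem_filter] at hx
    rw [hCdef, Finset.mem_filter]
    obtain ⟨-, hx0, hqx⟩ := hx
    refine ⟨Finset.mem_univ x, hx0, fun hcop => ?_⟩
    have hqn : q ∣ n := hnt ▸ Dvd.intro t rfl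
    have : q ∣ Nat.gcd n x.val := Nat.dvd_gcd hqn hqx
    rw [Nat.Coprime] at hcop
    rw [hcop] at this
    have := Nat.le_of_dvd one_pos this
    omega
  -- injection from C \ A into A via the Hamiltonian successor map
  haveI : Fintype (zdVertex (ZMod n)) := Fintype.ofFinite _
  obtain ⟨a0, pw, hcyc, hsupp⟩ := hham
  obtain ⟨σ, hσinj, hσadj⟩ := ham_succ ⟨a0, pw, hcyc, hsupp⟩
  set g : ZMod n → ZMod n :=
    fun x => if h : x ∈ zdVertex (ZMod n) then (σ ⟨x, h⟩ : ZMod n) else 0 with hgdef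
  have hmemv : ∀ x ∈ C \ A, x ∈ zdVertex (ZMod n) := by
    intro x hx
    rw [Finset.mem_sdiff, hCdef, Finset.mem_filter] at hx
    obtain ⟨⟨-, hx0, hxcop⟩, -⟩ := hx
    have hxne : x ≠ 0 := fun h => hx0 (by rw [h, ZMod.val_zero])
    have hxu : ¬ IsUnit x := by
      intro hu
      have : IsUnit ((x.val : ℕ) : ZMod n) := by rwa [ZMod.natCast_val, ZMod.cast_id]
      rw [ZMod.isUnit_iff_coprime] at this
      exact hxcop this.symm
    exact ⟨hxne, exists_mul_eq_zero' hxu⟩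
  have hqdvd : ∀ x ∈ C \ A, ¬ q ∣ x.val := by
    intro x hx
    rw [Finset.mem_sdiff] at hx
    obtain ⟨hxC, hxA⟩ := hx
    rw [hCdef, Finset.mem_filter] at hxC
    intro hdvd
    exact hxA (by rw [hAdef, Finset.mem_filter]; exact ⟨Finset.mem_univ x, hxC.2.1, hdvd⟩)
  have hmaps : ∀ x ∈ C \ A, g x ∈ A := by
    intro x hx
    have hxv := hmemv x hx
    rw [hgdef]
    simp only [dif_pos hxv]
    set w := σ ⟨x, hxv⟩ with hwdef
    have hadj := hσadj ⟨x, hxv⟩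
    obtain ⟨hne, hmul⟩ : _ ∧ _ := hadj
    have hw0 : (w : ZMod n) ≠ 0 := w.prop.1
    rw [hAdef, Finset.mem_filter]
    refine ⟨Finset.mem_univ _, fun h => hw0 ((ZMod.val_eq_zero _).mp h), ?_⟩
    -- q divides the value of w
    have hv : (x * (w : ZMod n)).val = 0 := by rw [hmul, ZMod.val_zero]
    rw [ZMod.val_mul] at hv
    have hdvdn : n ∣ x.val * (w : ZMod n).val := Nat.dvd_of_mod_eq_zero hv
    have hqn : q ∣ n := hnt ▸ Dvd.intro t rfl
    rcases (Nat.Prime.dvd_mul hqprime).mp (dvd_trans hqn hdvdn) with h | h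
    · exact absurd h (hqdvd x hx)
    · exact h
  have hinj : Set.InjOn g ↑(C \ A) := by
    intro x hx y hy hxy
    have hxv := hmemv x (Finset.mem_coe.mp hx)
    have hyv := hmemv y (Finset.mem_coe.mp hy)
    rw [hgdef] at hxy
    simp only [dif_pos hxv, dif_pos hyv] at hxy
    have : σ ⟨x, hxv⟩ = σ ⟨y, hyv⟩ := Subtype.ext hxy
    have := hσinj this
    exact congrArg Subtype.val this
  have hle : (C \ A).card ≤ A.card := Finset.card_le_card_of_injOn g hmaps hinj
  rw [Finset.card_sdiff_of_subset hAC, hAcard, hCcard] at hle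
  omega
end

section
/- For a prime p and integer m ≥ 1, the zero-divisor graph Γ(ℤ_{p^m}) is Hamiltonian if and only if m = 2 and p ≥ 5. -/
open SimpleGraph

section Helpers

variable {V : Type*} {G : SimpleGraph V}

private lemma aux_mod {n x y : ℕ} (hx : x < n) (hy : y < n)
    (h : (x + 1) % n = (y + 1) % n) : x = y := by
  rcases Nat.lt_or_ge (x + 1) n with h1 | h1 <;> rcases Nat.lt_or_ge (y + 1) n with h2 | h2
  · rw [Nat.mod_eq_of_lt h1, Nat.mod_eq_of_lt h2] at h; omega
  · have e2 : y + 1 = n := by omega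
    rw [Nat.mod_eq_of_lt h1, e2, Nat.mod_self] at h; omega
  · have e1 : x + 1 = n := by omega
    rw [Nat.mod_eq_of_lt h2, e1, Nat.mod_self] at h; omega
  · omega

private lemma cyc_succ {a : V} {l : List V} (hnd : l.Nodup) (hne : l ≠ [])
    (hch : List.Chain' G.Adj (a :: l)) (hgl : l.getLast hne = a)
    (hmem : ∀ v, v ∈ l) :
    ∃ f : V → V, Function.Injective f ∧ ∀ v, G.Adj v (f v) := by
  classical
  have hnpos : 0 < l.length := List.length_pos_iff.mpr hne
  have hlast : l.get ⟨l.length - 1, by omega⟩ = a := by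
    rw [← hgl, List.getLast_eq_getElem]; simp
  have hchain := List.isChain_iff_getElem.mp hch
  have hadj : ∀ i : Fin l.length, G.Adj (l.get i)
      (l.get ⟨((i : ℕ) + 1) % l.length, Nat.mod_lt _ hnpos⟩) := by
    intro i
    rcases Nat.lt_or_ge ((i : ℕ) + 1) l.length with hi | hi
    · have h1 := hchain ((i : ℕ) + 1) (by simpa using hi)
      simp only [List.getElem_cons_succ] at h1
      have e : (⟨((i : ℕ) + 1) % l.length, Nat.mod_lt _ hnpos⟩ : Fin l.length)
          = ⟨(i : ℕ) + 1, hi⟩ := Fin.ext (Nat.mod_eq_of_lt hi)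
      rw [e]
      convert h1 using 2 <;> simp
    · have hin : (i : ℕ) = l.length - 1 := by omega
      have e : (⟨((i : ℕ) + 1) % l.length, Nat.mod_lt _ hnpos⟩ : Fin l.length)
          = ⟨0, hnpos⟩ := by
        apply Fin.ext
        simp only
        have h2 : (i : ℕ) + 1 = l.length := by omega
        rw [h2, Nat.mod_self]
      have e2 : l.get i = a := by rw [← hlast]; congr 1; exact Fin.ext hin
      rw [e, e2]
      have h0 := hchain 0 (by simpa using hnpos)
      simpa using h0
  refine ⟨fun v => l.get ⟨(l.idxOf v + 1) % l.length, Nat.mod_lt _ hnpos⟩, ?_, ?_⟩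
  · intro u v huv
    have h1 := (hnd.get_inj_iff).mp huv
    have h2 : (l.idxOf u + 1) % l.length = (l.idxOf v + 1) % l.length :=
      congrArg Fin.val h1
    have hu : l.idxOf u < l.length := List.idxOf_lt_length_iff.mpr (hmem u)
    have hv : l.idxOf v < l.length := List.idxOf_lt_length_iff.mpr (hmem v)
    exact (List.idxOf_inj (hmem u)).mp (aux_mod hu hv h2)
  · intro v
    have hv : l.idxOf v < l.length := List.idxOf_lt_length_iff.mpr (hmem v)
    have := hadj ⟨l.idxOf v, hv⟩
    rwa [List.idxOf_get] at this

/-- From a Hamiltonian cycle, extract an injective "successor" function with each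
vertex adjacent to its successor. -/
private lemma ham_succ_s10 {a : V} {c : G.Walk a a} (hc : c.IsCycle)
    (hall : ∀ v, v ∈ c.support) :
    ∃ f : V → V, Function.Injective f ∧ ∀ v, G.Adj v (f v) := by
  classical
  obtain ⟨l, hsupp⟩ : ∃ l, c.support = a :: l := ⟨_, c.support_eq_cons⟩
  have hnd : l.Nodup := by have := hc.support_nodup; rwa [hsupp] at this
  have hlen3 : 3 ≤ c.length := hc.three_le_length
  have hlenl : l.length = c.length := by
    have h := c.length_support
    rw [hsupp] at h
    simp only [List.length_cons] at h
    omega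
  have hne : l ≠ [] := by intro h; rw [h] at hlenl; simp at hlenl; omega
  have hch : List.Chain' G.Adj (a :: l) := by
    have := c.isChain_adj_support; rwa [hsupp] at this
  have hgl : l.getLast hne = a := by
    have h1 : c.support.getLast? = some a := by
      rw [List.getLast?_eq_getLast (by simp), c.getLast_support]
    rw [hsupp, List.getLast?_eq_getLast (by simp), List.getLast_cons hne] at h1
    exact Option.some_injective _ h1
  have hmem : ∀ v : V, v ∈ l := by
    intro v
    have h := hall v
    rw [hsupp] at h
    rcases List.mem_cons.mp h with h | h
    · rw [h, ← hgl]; exact List.getLast_mem hne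
    · exact h
  exact cyc_succ hnd hne hch hgl hmem

private lemma edge_not_mem {a b : V} (q : G.Walk b a) (hnd : q.support.Nodup)
    (hlen : 2 ≤ q.length) : s(a, b) ∉ q.edges := by
  intro hmem
  cases q with
  | nil => simp at hmem
  | @cons _ c _ h' q' =>
    rw [Walk.edges_cons, List.mem_cons] at hmem
    rw [Walk.support_cons, List.nodup_cons] at hnd
    rcases hmem with hmem | hmem
    · have hac : a = c := by
        rw [Sym2.eq_iff] at hmem
        rcases hmem with ⟨h1, h2⟩ | ⟨h1, _⟩
        · exact absurd h2 h'.ne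
        · exact h1
      subst hac
      have hq0 : q'.length = 0 := by
        by_contra hq
        obtain ⟨t, hst⟩ : ∃ t, q'.support = a :: t := ⟨_, q'.support_eq_cons⟩
        have htne : t ≠ [] := by
          intro h
          apply hq
          have hls := q'.length_support
          rw [hst, h] at hls
          have : q'.length + 1 = 1 := by rw [← hls]; rfl
          omega
        have hat : a ∈ t := by
          have h1 : q'.support.getLast? = some a := by
            rw [List.getLast?_eq_getLast (by simp), q'.getLast_support]
          rw [hst, List.getLast?_eq_getLast (by simp), List.getLast_cons htne] at h1
          rw [← Option.some_injective _ h1]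
          exact List.getLast_mem htne
        have hndq := hnd.2
        rw [hst, List.nodup_cons] at hndq
        exact hndq.1 hat
      simp only [Walk.length_cons] at hlen
      omega
    · exact hnd.1 (q'.snd_mem_support_of_mem_edges hmem)

private lemma exists_walk_through (hG : ∀ x y : V, x ≠ y → G.Adj x y) :
    ∀ (l : List V) (b a : V), l.Nodup → b ∉ l → a ∉ l → a ≠ b →
      ∃ w : G.Walk b a, w.support = b :: (l ++ [a])
  | [], b, a, _, _, _, hab =>
    ⟨Walk.cons (hG b a fun h => hab h.symm) Walk.nil, by simp⟩
  | c :: l', b, a, hnd, hb, ha, hab => by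
    have hnd' : l'.Nodup := (List.nodup_cons.mp hnd).2
    have hbc : b ≠ c := fun h => hb (h ▸ List.mem_cons_self (a := c) (l := l'))
    have hcl : c ∉ l' := (List.nodup_cons.mp hnd).1
    have hal : a ∉ l' := fun h => ha (List.mem_cons_of_mem c h)
    have hac : a ≠ c := fun h => ha (h ▸ List.mem_cons_self (a := c) (l := l'))
    obtain ⟨w', hw'⟩ := exists_walk_through hG l' c a hnd' hcl hal hac
    exact ⟨Walk.cons (hG b c hbc) w', by simp [hw']⟩

private lemma complete_ham [Fintype V] [DecidableEq V]
    (hG : ∀ x y : V, x ≠ y → G.Adj x y) (h3 : 3 ≤ Fintype.card V) :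
    ∃ (a : V) (w : G.Walk a a), w.IsCycle ∧ ∀ v, v ∈ w.support := by
  have hulen : (Finset.univ.toList (α := V)).length = Fintype.card V :=
    Finset.length_toList _
  obtain ⟨a, b, c, l, hm⟩ : ∃ a b c l',
      (Finset.univ.toList (α := V)) = a :: b :: c :: l' := by
    rcases h : (Finset.univ.toList (α := V)) with _ | ⟨a, _ | ⟨b, _ | ⟨c, l⟩⟩⟩
    · rw [h] at hulen; simp at hulen; omega
    · rw [h] at hulen; simp at hulen; omega
    · rw [h] at hulen; simp at hulen; omega
    · exact ⟨a, b, c, l, rfl⟩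
  have hnd2 : (a :: b :: c :: l).Nodup := hm ▸ Finset.nodup_toList _
  have hmem2 : ∀ v : V, v ∈ a :: b :: c :: l := fun v =>
    hm ▸ Finset.mem_toList.mpr (Finset.mem_univ v)
  have hab : a ≠ b := by
    intro h; rw [List.nodup_cons] at hnd2; exact hnd2.1 (h ▸ List.mem_cons_self (a := b))
  have hnl : (c :: l).Nodup := (List.nodup_cons.mp (List.nodup_cons.mp hnd2).2).2
  have hbl : b ∉ c :: l := (List.nodup_cons.mp (List.nodup_cons.mp hnd2).2).1
  have hal : a ∉ c :: l := fun h =>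
    (List.nodup_cons.mp hnd2).1 (List.mem_cons_of_mem b h)
  obtain ⟨q, hq⟩ := exists_walk_through hG (c :: l) b a hnl hbl hal hab
  have hqnd : q.support.Nodup := by
    rw [hq]
    have hperm : List.Perm (b :: (c :: l ++ [a])) (a :: b :: c :: l) := by
      exact (List.Perm.cons b (List.perm_append_comm (l₁ := c :: l) (l₂ := [a]))).trans
        (List.Perm.swap a b _)
    exact hperm.nodup_iff.mpr hnd2
  have hqlen : q.length = (c :: l).length + 1 := by
    have h := q.length_support
    rw [hq] at h
    simp only [List.length_cons, List.length_append, List.length_singleton,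
      List.length_nil] at h
    simp only [List.length_cons]
    omega
  refine ⟨a, Walk.cons (hG a b hab) q, ?_, ?_⟩
  · rw [Walk.cons_isCycle_iff]
    exact ⟨Walk.IsPath.mk' hqnd, edge_not_mem q hqnd (by simp [hqlen])⟩
  · intro v
    have h := hmem2 v
    rw [Walk.support_cons, hq]
    simp only [List.mem_cons, List.mem_append, List.mem_singleton] at h ⊢
    tauto

end Helpers

section ZModFacts

private lemma zmul_eq_zero_iff {n : ℕ} [NeZero n] (x y : ZMod n) :
    x * y = 0 ↔ n ∣ x.val * y.val := by
  have h : x * y = ((x.val * y.val : ℕ) : ZMod n) := by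
    push_cast [ZMod.natCast_zmod_val]
    ring
  rw [h, ZMod.natCast_eq_zero_iff]

private lemma zd_val_dvd {p m : ℕ} (hp : p.Prime) (hm : 0 < m) [NeZero (p ^ m)]
    {x : ZMod (p ^ m)} (hx : x ∈ zdVertex (ZMod (p ^ m))) : p ∣ x.val := by
  obtain ⟨hx0, y, hy0, hxy⟩ := hx
  have hnu : ¬ IsUnit x := by
    intro h
    obtain ⟨u, rfl⟩ := h
    exact hy0 ((Units.mul_right_eq_zero u).mp hxy)
  rw [← ZMod.natCast_zmod_val x, ZMod.isUnit_iff_coprime] at hnu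
  by_contra hd
  apply hnu
  have h1 : Nat.Coprime p x.val := (Nat.Prime.coprime_iff_not_dvd hp).mpr hd
  have h2 : Nat.Coprime x.val p := h1.symm
  exact (Nat.coprime_pow_right_iff hm _ _).mpr h2

end ZModFacts

theorem stmt10 (p m : ℕ) (hp : p.Prime) (hm : 1 ≤ m) :
    IsHamiltonianGraph (zdGraph (ZMod (p ^ m))) ↔ (m = 2 ∧ 5 ≤ p) := by
  classical
  have hp2 : 2 ≤ p := hp.two_le
  have hpm : 0 < p ^ m := pow_pos hp.pos m
  haveI : NeZero (p ^ m) := ⟨hpm.ne'⟩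
  constructor
  · rintro ⟨a, c, hc, hall⟩
    have hcase : m = 1 ∨ m = 2 ∨ 3 ≤ m := by omega
    rcases hcase with h1 | h2 | h3
    · -- m = 1 : no zero divisors in a field
      exfalso
      subst h1
      haveI : Fact (p ^ 1).Prime := ⟨by rwa [pow_one]⟩
      obtain ⟨hx0, y, hy0, hxy⟩ := a.2
      rcases mul_eq_zero.mp hxy with h | h
      · exact hx0 h
      · exact hy0 h
    · -- m = 2
      subst h2
      refine ⟨rfl, ?_⟩
      by_contra hlt
      push_neg at hlt
      have hp3 : p ≤ 3 := by
        by_contra h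
        push_neg at h
        have hp4 : p = 4 := by omega
        rw [hp4] at hp
        norm_num at hp
      -- extract three distinct vertices from the cycle
      have hnd : c.support.tail.Nodup := hc.support_nodup
      have hlen3 : 3 ≤ c.length := hc.three_le_length
      have hlenl : c.support.tail.length = c.length := by
        have h := c.length_support
        obtain ⟨l, hsupp⟩ : ∃ l, c.support = a :: l := ⟨_, c.support_eq_cons⟩
        rw [hsupp] at h ⊢
        simp only [List.length_cons] at h
        simp only [List.tail_cons]
        omega
      obtain ⟨x, y, z, t, ht⟩ : ∃ x y z t, c.support.tail = x :: y :: z :: t := by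
        rcases h : c.support.tail with _ | ⟨x, _ | ⟨y, _ | ⟨z, t⟩⟩⟩ <;>
          rw [h] at hlenl <;> simp at hlenl <;> try omega
        · exact ⟨x, y, z, t, rfl⟩
      rw [ht] at hnd
      have hxy : x ≠ y := by intro h; subst h; simp at hnd
      have hxz : x ≠ z := by intro h; subst h; simp at hnd
      have hyz : y ≠ z := by intro h; subst h; simp at hnd
      -- each vertex gives a distinct value in [1, p)
      have key : ∀ v : zdVertex (ZMod (p ^ 2)),
          1 ≤ (v : ZMod (p ^ 2)).val / p ∧ (v : ZMod (p ^ 2)).val / p < p := by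
        intro v
        have hdvd : p ∣ (v : ZMod (p ^ 2)).val := zd_val_dvd hp (by norm_num) v.2
        have hne : (v : ZMod (p ^ 2)).val ≠ 0 := by
          intro h
          exact v.2.1 ((ZMod.val_eq_zero _).mp h)
        have hlt : (v : ZMod (p ^ 2)).val < p ^ 2 := ZMod.val_lt _
        constructor
        · rw [Nat.le_div_iff_mul_le hp.pos]
          simpa using Nat.le_of_dvd (Nat.pos_of_ne_zero hne) hdvd
        · rw [Nat.div_lt_iff_lt_mul hp.pos]
          calc (v : ZMod (p ^ 2)).val < p ^ 2 := hlt
            _ = p * p := sq p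
      have hinj : ∀ v w : zdVertex (ZMod (p ^ 2)),
          (v : ZMod (p ^ 2)).val / p = (w : ZMod (p ^ 2)).val / p → v = w := by
        intro v w h
        have hv : p ∣ (v : ZMod (p ^ 2)).val := zd_val_dvd hp (by norm_num) v.2
        have hw : p ∣ (w : ZMod (p ^ 2)).val := zd_val_dvd hp (by norm_num) w.2
        have : (v : ZMod (p ^ 2)).val = (w : ZMod (p ^ 2)).val := by
          rw [← Nat.div_mul_cancel hv, ← Nat.div_mul_cancel hw, h]
        exact Subtype.ext (ZMod.val_injective _ this)
      obtain ⟨h1x, h2x⟩ := key x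
      obtain ⟨h1y, h2y⟩ := key y
      obtain ⟨h1z, h2z⟩ := key z
      have d1 : (x : ZMod (p ^ 2)).val / p ≠ (y : ZMod (p ^ 2)).val / p :=
        fun h => hxy (hinj _ _ h)
      have d2 : (x : ZMod (p ^ 2)).val / p ≠ (z : ZMod (p ^ 2)).val / p :=
        fun h => hxz (hinj _ _ h)
      have d3 : (y : ZMod (p ^ 2)).val / p ≠ (z : ZMod (p ^ 2)).val / p :=
        fun h => hyz (hinj _ _ h)
      omega
    · -- m ≥ 3 : contradiction via counting
      exfalso
      obtain ⟨f, hfinj, hfadj⟩ := ham_succ_s10 hc hall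
      obtain ⟨j, rfl⟩ : ∃ j, m = j + 3 := ⟨m - 3, by omega⟩
      have hpj2 : 0 < p ^ (j + 2) := pow_pos hp.pos _
      have hp3le : p ^ 3 ≤ p ^ (j + 3) := Nat.pow_le_pow_right hp.pos (by omega)
      -- the family of valuation-1 vertices
      have hElt : ∀ k : Fin p, p + (k : ℕ) * p ^ 2 < p ^ (j + 3) := by
        intro k
        have hk : (k : ℕ) < p := k.2
        have : p + (k : ℕ) * p ^ 2 < p ^ 3 := by nlinarith [sq_nonneg p]
        omega
      have hEne : ∀ k : Fin p, ((p + (k : ℕ) * p ^ 2 : ℕ) : ZMod (p ^ (j + 3))) ≠ 0 := by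
        intro k h
        rw [ZMod.natCast_eq_zero_iff] at h
        have := Nat.le_of_dvd (by positivity) h
        have := hElt k
        omega
      have hyne : ((p ^ (j + 2) : ℕ) : ZMod (p ^ (j + 3))) ≠ 0 := by
        intro h
        rw [ZMod.natCast_eq_zero_iff] at h
        have h1 := Nat.le_of_dvd hpj2 h
        have h2 : p ^ (j + 2) < p ^ (j + 3) :=
          Nat.pow_lt_pow_right (by omega) (by omega)
        omega
      have hEzd : ∀ k : Fin p,
          ((p + (k : ℕ) * p ^ 2 : ℕ) : ZMod (p ^ (j + 3))) ∈ zdVertex (ZMod (p ^ (j + 3))) := by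
        intro k
        refine ⟨hEne k, ((p ^ (j + 2) : ℕ) : ZMod (p ^ (j + 3))), hyne, ?_⟩
        rw [← Nat.cast_mul, ZMod.natCast_eq_zero_iff]
        exact ⟨1 + (k : ℕ) * p, by ring⟩
      set E : Fin p → zdVertex (ZMod (p ^ (j + 3))) := fun k =>
        ⟨_, hEzd k⟩ with hE
      have hEval : ∀ k : Fin p, (E k : ZMod (p ^ (j + 3))).val = p + (k : ℕ) * p ^ 2 :=
        fun k => ZMod.val_cast_of_lt (hElt k)
      have hEinj : Function.Injective E := by
        intro k k' h
        have h1 : (E k : ZMod (p ^ (j + 3))).val = (E k' : ZMod (p ^ (j + 3))).val := by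
          rw [h]
        rw [hEval, hEval] at h1
        have hpp : 0 < p ^ 2 := pow_pos hp.pos _
        have : (k : ℕ) = (k' : ℕ) := by
          have := Nat.eq_of_mul_eq_mul_right hpp (by omega : (k : ℕ) * p ^ 2 = (k' : ℕ) * p ^ 2)
          exact this
        exact Fin.ext this
      -- successor of each E k has valuation ≥ j+2
      have hAdvd : ∀ k : Fin p, p ^ (j + 2) ∣ (f (E k) : ZMod (p ^ (j + 3))).val := by
        intro k
        have hadj := hfadj (E k)
        have hprod : (E k : ZMod (p ^ (j + 3))) * (f (E k) : ZMod (p ^ (j + 3))) = 0 :=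
          (show _ ∧ _ from hadj).2
        rw [zmul_eq_zero_iff] at hprod
        rw [hEval] at hprod
        set w := (f (E k) : ZMod (p ^ (j + 3))).val
        have h1 : p * p ^ (j + 2) ∣ p * ((1 + (k : ℕ) * p) * w) := by
          have e1 : p * ((1 + (k : ℕ) * p) * w) = (p + (k : ℕ) * p ^ 2) * w := by ring
          have e2 : p * p ^ (j + 2) = p ^ (j + 3) := by ring
          rw [e1, e2]
          exact hprod
        have h2 : p ^ (j + 2) ∣ (1 + (k : ℕ) * p) * w :=
          (Nat.mul_dvd_mul_iff_left hp.pos).mp h1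
        have hcop : Nat.Coprime (p ^ (j + 2)) (1 + (k : ℕ) * p) := by
          rw [Nat.coprime_pow_left_iff (Nat.succ_pos (j + 1)), hp.coprime_iff_not_dvd]
          intro hd
          rw [add_comm, Nat.dvd_add_right (Dvd.intro_left _ rfl)] at hd
          have := Nat.le_of_dvd one_pos hd
          omega
        exact hcop.dvd_of_dvd_mul_left h2
      have hAne : ∀ k : Fin p, (f (E k) : ZMod (p ^ (j + 3))).val ≠ 0 := by
        intro k h
        exact (f (E k)).2.1 ((ZMod.val_eq_zero _).mp h)
      -- the quotient map into Fin p
      have hq1 : ∀ k : Fin p, 1 ≤ (f (E k) : ZMod (p ^ (j + 3))).val / p ^ (j + 2) := by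
        intro k
        rw [Nat.le_div_iff_mul_le hpj2]
        simpa using Nat.le_of_dvd (Nat.pos_of_ne_zero (hAne k)) (hAdvd k)
      have hq2 : ∀ k : Fin p, (f (E k) : ZMod (p ^ (j + 3))).val / p ^ (j + 2) < p := by
        intro k
        rw [Nat.div_lt_iff_lt_mul hpj2]
        calc (f (E k) : ZMod (p ^ (j + 3))).val < p ^ (j + 3) := ZMod.val_lt _
          _ = p * p ^ (j + 2) := by ring
      set Φ : Fin p → Fin p := fun k =>
        ⟨(f (E k) : ZMod (p ^ (j + 3))).val / p ^ (j + 2), hq2 k⟩ with hΦ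
      have hΦinj : Function.Injective Φ := by
        intro k k' h
        have h1 : (f (E k) : ZMod (p ^ (j + 3))).val / p ^ (j + 2)
            = (f (E k') : ZMod (p ^ (j + 3))).val / p ^ (j + 2) := congrArg Fin.val h
        have h2 : (f (E k) : ZMod (p ^ (j + 3))).val
            = (f (E k') : ZMod (p ^ (j + 3))).val := by
          rw [← Nat.div_mul_cancel (hAdvd k), ← Nat.div_mul_cancel (hAdvd k'), h1]
        exact hEinj (hfinj (Subtype.ext (ZMod.val_injective _ h2)))
      have hΦsurj : Function.Surjective Φ := Finite.injective_iff_surjective.mp hΦinj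
      obtain ⟨k, hk⟩ := hΦsurj ⟨0, hp.pos⟩
      have : (f (E k) : ZMod (p ^ (j + 3))).val / p ^ (j + 2) = 0 := congrArg Fin.val hk
      have := hq1 k
      omega
  · rintro ⟨rfl, hp5⟩
    haveI : Fintype ↥(zdVertex (ZMod (p ^ 2))) := Fintype.ofFinite _
    -- the graph is complete
    have hG : ∀ x y : ↥(zdVertex (ZMod (p ^ 2))), x ≠ y →
        (zdGraph (ZMod (p ^ 2))).Adj x y := by
      intro x y hxy
      refine (show _ ∧ _ from ⟨hxy, ?_⟩)
      obtain ⟨ax, hax⟩ := zd_val_dvd hp (by norm_num) x.2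
      obtain ⟨ay, hay⟩ := zd_val_dvd hp (by norm_num) y.2
      rw [zmul_eq_zero_iff, hax, hay]
      exact ⟨ax * ay, by ring⟩
    -- three vertices t*p, t = 1, 2, 3
    have hmk : ∀ t : ℕ, 1 ≤ t → t ≤ 3 →
        ((t * p : ℕ) : ZMod (p ^ 2)) ∈ zdVertex (ZMod (p ^ 2)) := by
      intro t ht1 ht3
      have hlt : t * p < p ^ 2 := by nlinarith
      have hne : ((t * p : ℕ) : ZMod (p ^ 2)) ≠ 0 := by
        intro h
        rw [ZMod.natCast_eq_zero_iff] at h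
        have := Nat.le_of_dvd (by positivity) h
        omega
      refine ⟨hne, ((p : ℕ) : ZMod (p ^ 2)), ?_, ?_⟩
      · intro h
        rw [ZMod.natCast_eq_zero_iff] at h
        have := Nat.le_of_dvd hp.pos h
        nlinarith
      · rw [← Nat.cast_mul, ZMod.natCast_eq_zero_iff]
        exact ⟨t, by ring⟩
    have hvval : ∀ t : ℕ, 1 ≤ t → t ≤ 3 →
        ((t * p : ℕ) : ZMod (p ^ 2)).val = t * p := by
      intro t ht1 ht3
      exact ZMod.val_cast_of_lt (by nlinarith)
    have h3 : 3 ≤ Fintype.card ↥(zdVertex (ZMod (p ^ 2))) := by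
      rw [show (3 : ℕ) = 2 + 1 from rfl, Nat.add_one_le_iff]
      rw [Fintype.two_lt_card_iff]
      refine ⟨⟨_, hmk 1 (by norm_num) (by norm_num)⟩,
        ⟨_, hmk 2 (by norm_num) (by norm_num)⟩,
        ⟨_, hmk 3 (by norm_num) (by norm_num)⟩, ?_, ?_, ?_⟩ <;>
        · intro h
          have h' := Subtype.ext_iff.mp h
          have h2 := congrArg ZMod.val h'
          rw [hvval _ (by norm_num) (by norm_num), hvval _ (by norm_num) (by norm_num)]
            at h2
          omega
    obtain ⟨a, w, hw1, hw2⟩ := complete_ham hG h3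
    exact ⟨a, w, hw1, hw2⟩
end
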